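/- arXiv:1511.09276 — 7 statements merged into one kernel-verified Lean document; each statement's English description precedes it below -/
import Mathlib

section
/- Let X ⊆ ℂ be a compact set and let F be an effective collection of Lipschitz paths in X. If f, g, h : ℂ → ℂ are continuous on X and both g and h are F-derivatives of f, then g(x) = h(x) for every x ∈ X. -/
open Set intervalIntegral Filter

noncomputable section

/-- A path datum: a function `ℝ → ℂ` together with its parameter interval endpoints. -/
abbrev PathData := (ℝ → ℂ) × ℝ × ℝ

/-- `p` is a (rectifiable, modelled as Lipschitz) path in `X`. -/
def IsLipPathIn (X : Set ℂ) (p : PathData) : Prop :=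
  p.2.1 < p.2.2 ∧ (∃ K : NNReal, LipschitzOnWith K p.1 (Set.Icc p.2.1 p.2.2)) ∧
    p.1 '' Set.Icc p.2.1 p.2.2 ⊆ X

/-- `g` is an `F`-derivative of `f`. -/
def IsFDeriv (F : Set PathData) (f g : ℂ → ℂ) : Prop :=
  ∀ p ∈ F, (∫ t in p.2.1..p.2.2, g (p.1 t) * deriv p.1 t) = f (p.1 p.2.2) - f (p.1 p.2.1)

/-- `g` is a `γ`-derivative of `f` on `[a,b]`: the fundamental-theorem identity holds
along every closed subinterval of `[a,b]`. -/
def IsPathDeriv (γ : ℝ → ℂ) (a b : ℝ) (f g : ℂ → ℂ) : Prop :=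
  ∀ c d : ℝ, a ≤ c → c ≤ d → d ≤ b →
    (∫ t in c..d, g (γ t) * deriv γ t) = f (γ d) - f (γ c)

/-- `γ` is admissible on `[a,b]`: nonconstant on every nondegenerate closed subinterval. -/
def AdmissiblePath (γ : ℝ → ℂ) (a b : ℝ) : Prop :=
  ∀ c d : ℝ, a ≤ c → c < d → d ≤ b →
    ∃ s ∈ Set.Icc c d, ∃ t ∈ Set.Icc c d, γ s ≠ γ t

/-- `F` is closed under subpaths. -/
def ClosedUnderSubpaths (F : Set PathData) : Prop :=
  ∀ p ∈ F, ∀ c d : ℝ, p.2.1 ≤ c → c < d → d ≤ p.2.2 → ((p.1, c, d) : PathData) ∈ F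

/-- `F` is an effective collection of paths in `X`. -/
def Effective (X : Set ℂ) (F : Set PathData) : Prop :=
  (∀ p ∈ F, IsLipPathIn X p ∧ AdmissiblePath p.1 p.2.1 p.2.2) ∧
  ClosedUnderSubpaths F ∧
  X ⊆ closure (⋃ p ∈ F, p.1 '' Set.Icc p.2.1 p.2.2)

/-- The maximal collection `F^max` generated by `F`. -/
def MaxColl (X : Set ℂ) (F : Set PathData) : Set PathData :=
  {p | IsLipPathIn X p ∧ AdmissiblePath p.1 p.2.1 p.2.2 ∧
    ∀ f g : ℂ → ℂ, ContinuousOn f X → ContinuousOn g X → IsFDeriv F f g →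
      IsPathDeriv p.1 p.2.1 p.2.2 f g}

/-- The uniform norm of `u` over `X`. -/
def supOn (u : ℂ → ℂ) (X : Set ℂ) : ℝ :=
  sSup ((fun x => ‖u x‖) '' X)

end


section Helpers
open MeasureTheory Metric

-- deriv norm bound
lemma deriv_norm_le_of_lip {γ : ℝ → ℂ} {K : NNReal} {a b t : ℝ}
    (hlip : LipschitzOnWith K γ (Set.Icc a b)) (ht : t ∈ Set.Ioo a b) :
    ‖deriv γ t‖ ≤ K := by
  have h1 : Set.Icc a b ∈ nhds t := Icc_mem_nhds ht.1 ht.2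
  have h2 := norm_fderiv_le_of_lipschitzOn ℝ h1 hlip
  calc ‖deriv γ t‖ = ‖fderiv ℝ γ t 1‖ := by rw [fderiv_apply_one_eq_deriv]
    _ ≤ ‖fderiv ℝ γ t‖ * ‖(1:ℝ)‖ := (fderiv ℝ γ t).le_opNorm 1
    _ ≤ K := by simpa using h2

lemma const_of_ae_deriv_zero {γ : ℝ → ℂ} {K : NNReal} {c d : ℝ} (hcd : c < d)
    (hlip : LipschitzOnWith K γ (Set.Icc c d))
    (hae : ∀ᵐ t : ℝ, t ∈ Set.Ioo c d → HasDerivAt γ 0 t) :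
    Set.EqOn γ (fun _ => γ c) (Set.Icc c d) := by
  have hcont : ContinuousOn γ (Set.Icc c d) := hlip.continuousOn
  have step : Set.EqOn γ (fun _ => γ c) (Set.Ioo c d) := by
    intro e he
    -- setup
    set u : ℕ → ℝ := fun n => (d - e) / (n + 1) with hu_def
    have hde : 0 < d - e := sub_pos.2 he.2
    have hu_pos : ∀ n, 0 < u n := fun n => by positivity
    have hu_le : ∀ n, u n ≤ d - e := fun n => by
      rw [hu_def]
      rw [div_le_iff₀ (by positivity)]
      nlinarith [show (0:ℝ) ≤ (n:ℝ) from Nat.cast_nonneg n]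
    have hu_tendsto : Tendsto u atTop (nhds 0) := by
      have := tendsto_one_div_add_atTop_nhds_zero_nat (𝕜 := ℝ)
      have h2 := this.const_mul (d - e)
      simpa [hu_def, div_eq_mul_inv, mul_comm, mul_assoc, one_div] using h2
    have hce : c < e := he.1
    -- interval integrability of γ on subintervals of [c,d]
    have hgi : ∀ A B : ℝ, c ≤ A → A ≤ B → B ≤ d → IntervalIntegrable γ volume A B := by
      intro A B hA hAB hB
      exact (hcont.mono (fun t ht => ⟨hA.trans ht.1, ht.2.trans hB⟩ :
          Set.Icc A B ⊆ Set.Icc c d)).intervalIntegrable_of_Icc hAB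
    set G : ℕ → ℝ → ℂ := fun n t => (u n)⁻¹ • (γ (t + u n) - γ t) with hG_def
    set I : ℕ → ℂ := fun n => ∫ t in Set.Ioc c e, G n t with hI_def
    -- DCT : I → 0
    have hmem : ∀ n, ∀ t ∈ Set.Icc c e, t + u n ∈ Set.Icc c d := by
      intro n t ht
      constructor
      · linarith [ht.1, (hu_pos n).le]
      · linarith [ht.2, hu_le n]
    have hDCT : Tendsto I atTop (nhds 0) := by
      have h0 : (0:ℂ) = ∫ _ in Set.Ioc c e, (0:ℂ) := by simp
      rw [h0]
      apply MeasureTheory.tendsto_integral_of_dominated_convergence (bound := fun _ => (K:ℝ))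
      · intro n
        have hc1 : ContinuousOn (fun t => γ (t + u n)) (Set.Icc c e) := by
          apply hcont.comp (continuous_add_right (u n)).continuousOn
          exact fun t ht => hmem n t ht
        have hc2 : ContinuousOn (G n) (Set.Icc c e) := by
          show ContinuousOn (fun t => (u n)⁻¹ • (γ (t + u n) - γ t)) (Set.Icc c e)
          apply ContinuousOn.fun_smul continuousOn_const
          exact hc1.sub (hcont.mono (fun t ht => ⟨ht.1, ht.2.trans he.2.le⟩))
        exact (hc2.mono Set.Ioc_subset_Icc_self).aestronglyMeasurable measurableSet_Ioc
      · exact integrableOn_const measure_Ioc_lt_top.ne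
      · intro n
        rw [ae_restrict_iff' measurableSet_Ioc]
        filter_upwards with t ht
        have ht' : t ∈ Set.Icc c e := Set.Ioc_subset_Icc_self ht
        have h1 : ‖γ (t + u n) - γ t‖ ≤ K * ‖(t + u n) - t‖ :=
          hlip.norm_sub_le (hmem n t ht') ⟨ht'.1, ht'.2.trans he.2.le⟩
        rw [hG_def]
        simp only [norm_smul, norm_inv, Real.norm_eq_abs, abs_of_pos (hu_pos n)]
        rw [inv_mul_le_iff₀ (hu_pos n)]
        calc ‖γ (t + u n) - γ t‖ ≤ K * ‖(t + u n) - t‖ := h1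
          _ = K * u n := by rw [add_sub_cancel_left, Real.norm_eq_abs, abs_of_pos (hu_pos n)]
          _ = u n * K := mul_comm _ _
      · filter_upwards [ae_restrict_of_ae hae, ae_restrict_mem measurableSet_Ioc] with t hder ht
        have htIoo : t ∈ Set.Ioo c d := ⟨ht.1, lt_of_le_of_lt ht.2 he.2⟩
        have hd := hder htIoo
        rw [hasDerivAt_iff_tendsto_slope] at hd
        have hseq : Tendsto (fun n => t + u n) atTop (nhdsWithin t {t}ᶜ) := by
            apply tendsto_nhdsWithin_of_tendsto_nhds_of_eventually_within
            · simpa using (tendsto_const_nhds (x := t)).add hu_tendsto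
            · filter_upwards with n
              simp only [Set.mem_compl_iff, Set.mem_singleton_iff]
              exact fun hcontra => (hu_pos n).ne' (by linarith)
        have := hd.comp hseq
        simp only [Function.comp_def, slope_def_module, add_sub_cancel_left] at this
        exact this
    -- second claim: I → γ e - γ c
    have hbound : ∀ n, ‖I n - (γ e - γ c)‖ ≤ 2 * K * u n := by
      intro n
      set v := u n with hv
      have hv_pos : 0 < v := hu_pos n
      have hv_le : v ≤ d - e := hu_le n
      have key1 : (∫ t in c..e, γ (t + v)) = ∫ t in (c+v)..(e+v), γ t :=
        intervalIntegral.integral_comp_add_right γ v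
      have i1 : IntervalIntegrable γ volume c (c+v) := hgi _ _ le_rfl (by linarith) (by linarith)
      have i2 : IntervalIntegrable γ volume (c+v) (e+v) := hgi _ _ (by linarith) (by linarith) (by linarith)
      have i3 : IntervalIntegrable γ volume c e := hgi _ _ le_rfl hce.le he.2.le
      have i4 : IntervalIntegrable γ volume e (e+v) := hgi _ _ hce.le (by linarith) (by linarith)
      set A' : ℂ := ∫ t in e..(e+v), (γ t - γ e) with hA'def
      set B' : ℂ := ∫ t in c..(c+v), (γ t - γ c) with hB'def
      have hA'eq : A' = (∫ t in e..(e+v), γ t) - v • γ e := by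
        rw [hA'def, intervalIntegral.integral_sub i4 intervalIntegrable_const,
          intervalIntegral.integral_const, add_sub_cancel_left]
      have hB'eq : B' = (∫ t in c..(c+v), γ t) - v • γ c := by
        rw [hB'def, intervalIntegral.integral_sub i1 intervalIntegrable_const,
          intervalIntegral.integral_const, add_sub_cancel_left]
      have hsplit1 : (∫ t in c..(c+v), γ t) + ∫ t in (c+v)..(e+v), γ t = ∫ t in c..(e+v), γ t :=
        intervalIntegral.integral_add_adjacent_intervals i1 i2
      have hsplit2 : (∫ t in c..e, γ t) + ∫ t in e..(e+v), γ t = ∫ t in c..(e+v), γ t :=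
        intervalIntegral.integral_add_adjacent_intervals i3 i4
      have hiv : IntervalIntegrable (fun t => γ (t + v)) volume c e := by
        have : ContinuousOn (fun t => γ (t + v)) (Set.Icc c e) := by
          apply hcont.comp (continuous_add_right v).continuousOn
          exact fun t ht => hmem n t ht
        exact this.intervalIntegrable_of_Icc hce.le
      have hJ : (∫ t in c..e, (γ (t + v) - γ t)) = A' - B' + v • (γ e - γ c) := by
        rw [intervalIntegral.integral_sub hiv i3, key1, hA'eq, hB'eq]
        have h1 := hsplit1
        have h2 := hsplit2
        simp only [Complex.real_smul] at *
        linear_combination h1 - h2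
      have hIn : I n = (v : ℝ)⁻¹ • (A' - B' + v • (γ e - γ c)) := by
        rw [hI_def]
        simp only
        rw [← intervalIntegral.integral_of_le hce.le, ← hJ, ← intervalIntegral.integral_smul]
      have hsub : I n - (γ e - γ c) = (v : ℝ)⁻¹ • (A' - B') := by
        rw [hIn]
        simp only [Complex.real_smul, Complex.ofReal_inv]
        have hvne : (v : ℂ) ≠ 0 := by
          simpa using Complex.ofReal_ne_zero.mpr hv_pos.ne'
        field_simp
        ring
      have hA'bd : ‖A'‖ ≤ (K * v) * v := by
        have := intervalIntegral.norm_integral_le_of_norm_le_const (C := K * v)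
          (f := fun t => γ t - γ e) (a := e) (b := e + v) ?_
        · calc ‖A'‖ ≤ (K*v) * |e + v - e| := this
            _ = (K*v) * v := by rw [add_sub_cancel_left, abs_of_pos hv_pos]
        · intro x hx
          rw [Set.uIoc_of_le (by linarith)] at hx
          have hx1 : x ∈ Set.Icc c d := ⟨hce.le.trans hx.1.le, by linarith [hx.2]⟩
          have := hlip.norm_sub_le hx1 ⟨hce.le, he.2.le⟩
          refine this.trans ?_
          have h5 : ‖x - e‖ ≤ v := by
            rw [Real.norm_eq_abs, abs_of_pos (by linarith [hx.1])]
            linarith [hx.2]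
          exact mul_le_mul_of_nonneg_left h5 K.coe_nonneg
      have hB'bd : ‖B'‖ ≤ (K * v) * v := by
        have := intervalIntegral.norm_integral_le_of_norm_le_const (C := K * v)
          (f := fun t => γ t - γ c) (a := c) (b := c + v) ?_
        · calc ‖B'‖ ≤ (K*v) * |c + v - c| := this
            _ = (K*v) * v := by rw [add_sub_cancel_left, abs_of_pos hv_pos]
        · intro x hx
          rw [Set.uIoc_of_le (by linarith)] at hx
          have hx1 : x ∈ Set.Icc c d := ⟨hx.1.le, by linarith [hx.2, hce, he.2]⟩
          have := hlip.norm_sub_le hx1 ⟨le_rfl, hcd.le⟩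
          refine this.trans ?_
          have h5 : ‖x - c‖ ≤ v := by
            rw [Real.norm_eq_abs, abs_of_pos (by linarith [hx.1])]
            linarith [hx.2]
          exact mul_le_mul_of_nonneg_left h5 K.coe_nonneg
      rw [hsub, norm_smul, Real.norm_eq_abs, abs_of_pos (by positivity : (0:ℝ) < v⁻¹)]
      have : ‖A' - B'‖ ≤ 2 * ((K*v)*v) := by
        calc ‖A' - B'‖ ≤ ‖A'‖ + ‖B'‖ := norm_sub_le _ _
          _ ≤ 2 * ((K*v)*v) := by linarith
      calc v⁻¹ * ‖A' - B'‖ ≤ v⁻¹ * (2 * ((K*v)*v)) := by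
            apply mul_le_mul_of_nonneg_left this (by positivity)
        _ = 2 * K * v := by field_simp
    have h2 : Tendsto (fun n => 2 * (K:ℝ) * u n) atTop (nhds 0) := by
      simpa using hu_tendsto.const_mul (2 * (K:ℝ))
    have h3 : Tendsto (fun n => ‖I n - (γ e - γ c)‖) atTop (nhds 0) :=
      squeeze_zero (fun n => norm_nonneg _) hbound h2
    have h4 : Tendsto I atTop (nhds (γ e - γ c)) :=
      tendsto_iff_norm_sub_tendsto_zero.2 h3
    have h5 : γ e - γ c = 0 := tendsto_nhds_unique h4 hDCT
    simpa [sub_eq_zero] using h5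
  exact step.of_subset_closure hcont continuousOn_const Set.Ioo_subset_Icc_self
    (by rw [closure_Ioo hcd.ne])

lemma ae_zero_of_integral_Ioc_zero {Φ0 : ℝ → ℂ} {c d : ℝ} (hcd : c < d)
    (hInt : Integrable ((Set.Ioc c d).indicator Φ0) volume)
    (hzero : ∀ c' d' : ℝ, c ≤ c' → c' ≤ d' → d' ≤ d → ∫ t in Set.Ioc c' d', Φ0 t = 0) :
    ∀ᵐ t : ℝ, t ∈ Set.Ioo c d → Φ0 t = 0 := by
  set Φ := (Set.Ioc c d).indicator Φ0 with hΦ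
  have hloc : LocallyIntegrable Φ volume := hInt.locallyIntegrable
  filter_upwards [IsUnifLocDoublingMeasure.ae_tendsto_average (μ := volume) hloc 1] with x hx hmem
  have h1 : Tendsto (id : ℝ → ℝ) (nhdsWithin 0 (Set.Ioi 0)) (nhdsWithin 0 (Set.Ioi 0)) :=
    tendsto_id
  have h2 : ∀ᶠ r in nhdsWithin (0:ℝ) (Set.Ioi 0), x ∈ closedBall x (1 * id r) := by
    filter_upwards [self_mem_nhdsWithin] with r hr
    simp only [Metric.mem_closedBall, dist_self, id, one_mul]
    exact (Set.mem_Ioi.1 hr).le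
  have htend : Tendsto (fun r => ⨍ y in closedBall x (id r), Φ y)
      (nhdsWithin (0:ℝ) (Set.Ioi 0)) (nhds (Φ x)) := hx _ _ h1 h2
  set m := min (x - c) (d - x) with hm
  have hm_pos : 0 < m := lt_min (by linarith [hmem.1]) (by linarith [hmem.2])
  have heq : ∀ᶠ r in nhdsWithin (0:ℝ) (Set.Ioi 0),
      (⨍ y in closedBall x (id r), Φ y) = 0 := by
    have hIoo : Set.Ioo (0:ℝ) m ∈ nhdsWithin (0:ℝ) (Set.Ioi 0) :=
      Ioo_mem_nhdsGT_of_mem ⟨le_rfl, hm_pos⟩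
    filter_upwards [hIoo] with r hr
    have hr0 : 0 < r := hr.1
    have hrc : c ≤ x - r := by
      have := hr.2; have := min_le_left (x - c) (d - x); simp only [← hm] at *; linarith [this]
    have hrd : x + r ≤ d := by
      have := hr.2; have := min_le_right (x - c) (d - x); simp only [← hm] at *; linarith [this]
    have hball : closedBall x (id r) = Set.Icc (x - r) (x + r) := Real.closedBall_eq_Icc
    have hint0 : ∫ y in closedBall x (id r), Φ y = 0 := by
      rw [hball, MeasureTheory.integral_Icc_eq_integral_Ioc]
      have hsub : Set.Ioc (x - r) (x + r) ⊆ Set.Ioc c d := fun y hy =>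
        ⟨lt_of_le_of_lt hrc hy.1, hy.2.trans hrd⟩
      have : ∫ y in Set.Ioc (x - r) (x + r), Φ y = ∫ y in Set.Ioc (x - r) (x + r), Φ0 y := by
        apply MeasureTheory.setIntegral_congr_fun measurableSet_Ioc
        exact fun y hy => Set.indicator_of_mem (hsub hy) Φ0
      rw [this]
      exact hzero _ _ hrc (by linarith) hrd
    rw [MeasureTheory.setAverage_eq, hint0, smul_zero]
  have : Φ x = 0 :=
    tendsto_nhds_unique htend (Tendsto.congr' (heq.mono fun r hr => hr.symm) tendsto_const_nhds)
  rwa [hΦ, Set.indicator_of_mem (Set.Ioo_subset_Ioc_self hmem)] at this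

end Helpers

open MeasureTheory Metric

/-- Uniqueness of `F`-derivatives for an effective collection `F`
of Lipschitz paths in a compact set `X`. -/
theorem fDeriv_unique (X : Set ℂ) (hX : IsCompact X)
    (F : Set PathData) (hF : Effective X F)
    (f g h : ℂ → ℂ) (hf : ContinuousOn f X) (hg : ContinuousOn g X)
    (hh : ContinuousOn h X)
    (hgd : IsFDeriv F f g) (hhd : IsFDeriv F f h) :
    ∀ x ∈ X, g x = h x := by
  intro x hx
  by_contra hne
  obtain ⟨hpath, hclosed, hdense⟩ := hF
  set φ : ℂ → ℂ := fun z => g z - h z with hφdef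
  have hφc : ContinuousOn φ X := hg.sub hh
  have hφx : φ x ≠ 0 := sub_ne_zero.2 hne
  have hφx' : 0 < ‖φ x‖ := norm_pos_iff.2 hφx
  set ε : ℝ := ‖φ x‖ / 2 with hε
  have hε_pos : 0 < ε := by positivity
  obtain ⟨δ, hδpos, hδ⟩ := Metric.continuousWithinAt_iff.1 (hφc x hx) ε hε_pos
  have hlow : ∀ z ∈ X, dist z x < δ → ε ≤ ‖φ z‖ := by
    intro z hz hzd
    have h1 := hδ hz hzd
    rw [dist_eq_norm] at h1
    have h2 := norm_sub_norm_le (φ x) (φ z)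
    rw [norm_sub_rev (φ x)] at h2
    rw [hε] at *
    linarith
  -- density
  obtain ⟨y, hyU, hyx⟩ := Metric.mem_closure_iff.1 (hdense hx) δ hδpos
  simp only [Set.mem_iUnion, Set.mem_image] at hyU
  obtain ⟨p, hp, t0, ht0, hyt0⟩ := hyU
  obtain ⟨⟨hab, ⟨K, hlip⟩, himg⟩, hadm⟩ := hpath p hp
  have hγc : ContinuousOn p.1 (Set.Icc p.2.1 p.2.2) := hlip.continuousOn
  have hδ' : 0 < δ - dist x y := by
    have : dist x y < δ := hyx
    linarith
  obtain ⟨η, hηpos, hη⟩ := Metric.continuousWithinAt_iff.1 (hγc t0 ht0) _ hδ'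
  set a := p.2.1 with ha_def
  set b := p.2.2 with hb_def
  set γ := p.1 with hγ_def
  set c := max a (t0 - η/2) with hc_def
  set d := min b (t0 + η/2) with hd_def
  have hac : a ≤ c := le_max_left _ _
  have hdb : d ≤ b := min_le_left _ _
  have hcd : c < d := by
    apply max_lt
    · exact lt_min hab (by linarith [ht0.1])
    · exact lt_min (by linarith [ht0.2]) (by linarith)
  have hsubI : Set.Icc c d ⊆ Set.Icc a b := Set.Icc_subset_Icc hac hdb
  have hkey : ∀ t ∈ Set.Icc c d, γ t ∈ X ∧ ε ≤ ‖φ (γ t)‖ := by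
    intro t ht
    have htab : t ∈ Set.Icc a b := hsubI ht
    have hdist : dist t t0 < η := by
      rw [Real.dist_eq, abs_sub_lt_iff]
      have h1 : t ≤ t0 + η/2 := ht.2.trans (min_le_right _ _)
      have h2 : t0 - η/2 ≤ t := (le_max_right _ _).trans ht.1
      constructor <;> linarith
    have h3 := hη htab hdist
    have hγtX : γ t ∈ X := himg ⟨t, htab, rfl⟩
    have h4 : dist (γ t) x < δ := by
      calc dist (γ t) x ≤ dist (γ t) (γ t0) + dist (γ t0) x := dist_triangle _ _ _
        _ < (δ - dist x y) + dist (γ t0) x := by linarith [h3]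
        _ = δ := by rw [hyt0, dist_comm]; ring
    exact ⟨hγtX, hlow _ hγtX h4⟩
  -- bounds on g, h
  obtain ⟨Mg, hMg⟩ := hX.exists_bound_of_continuousOn hg
  obtain ⟨Mh, hMh⟩ := hX.exists_bound_of_continuousOn hh
  have hKbd : ∀ t ∈ Set.Ioo a b, ‖deriv γ t‖ ≤ K := fun t ht => deriv_norm_le_of_lip hlip ht
  have hbae : ∀ᵐ t : ℝ, t ≠ b := by
    have : ({b}ᶜ : Set ℝ) ∈ ae volume := compl_mem_ae_iff.2 (measure_singleton b)
    filter_upwards [this] with t ht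
    exact ht
  have hIocIoo : ∀ t ∈ Set.Ioc c d, t ≠ b → t ∈ Set.Ioo a b := by
    intro t ht htb
    exact ⟨lt_of_le_of_lt hac ht.1, lt_of_le_of_ne (ht.2.trans hdb) htb⟩
  -- measurability helpers
  have hcomp : ∀ (w : ℂ → ℂ), ContinuousOn w X → ContinuousOn (fun t => w (γ t)) (Set.Icc a b) :=
    fun w hw => hw.comp hγc (fun t ht => himg ⟨t, ht, rfl⟩)
  have hmeas : ∀ (w : ℂ → ℂ), ContinuousOn w X → ∀ (A B : ℝ), a ≤ A → B ≤ b →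
      AEStronglyMeasurable (fun t => w (γ t) * deriv γ t) (volume.restrict (Set.Ioc A B)) := by
    intro w hw A B hA hB
    have h1 : ContinuousOn (fun t => w (γ t)) (Set.Ioc A B) :=
      (hcomp w hw).mono (fun t ht => ⟨hA.trans ht.1.le, ht.2.trans hB⟩)
    exact (h1.aestronglyMeasurable measurableSet_Ioc).mul
      ((measurable_deriv γ).aestronglyMeasurable.restrict)
  have hintOn : ∀ (w : ℂ → ℂ) (Mw : ℝ), ContinuousOn w X → (∀ z ∈ X, ‖w z‖ ≤ Mw) →
      ∀ (A B : ℝ), a ≤ A → A ≤ B → B ≤ b →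
      IntegrableOn (fun t => w (γ t) * deriv γ t) (Set.Ioc A B) volume := by
    intro w Mw hw hMw A B hA hAB hB
    refine ⟨hmeas w hw A B hA hB, ?_⟩
    apply MeasureTheory.HasFiniteIntegral.restrict_of_bounded (C := Mw * K) measure_Ioc_lt_top
    rw [ae_restrict_iff' measurableSet_Ioc]
    filter_upwards [hbae] with t htb ht
    have htIoo : t ∈ Set.Ioo a b :=
      ⟨lt_of_le_of_lt hA ht.1, lt_of_le_of_ne (ht.2.trans hB) htb⟩
    rw [norm_mul]
    have hw1 : ‖w (γ t)‖ ≤ Mw := hMw _ (himg ⟨t, Set.Ioo_subset_Icc_self htIoo, rfl⟩)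
    have hw2 : ‖deriv γ t‖ ≤ K := hKbd t htIoo
    exact mul_le_mul hw1 hw2 (norm_nonneg _) ((norm_nonneg _).trans hw1)
  -- Φ0 and the zero-integral property
  set Φ0 : ℝ → ℂ := fun t => φ (γ t) * deriv γ t with hΦ0def
  have hφbd : ∀ z ∈ X, ‖φ z‖ ≤ Mg + Mh := by
    intro z hz
    calc ‖φ z‖ ≤ ‖g z‖ + ‖h z‖ := norm_sub_le _ _
      _ ≤ Mg + Mh := add_le_add (hMg z hz) (hMh z hz)
  have hzero : ∀ c' d' : ℝ, c ≤ c' → c' ≤ d' → d' ≤ d → ∫ t in Set.Ioc c' d', Φ0 t = 0 := by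
    intro c' d' h1 h2 h3
    rcases eq_or_lt_of_le h2 with rfl | h2'
    · simp
    · have hp' : ((γ, c', d') : PathData) ∈ F :=
        hclosed p hp c' d' (hac.trans h1) h2' (h3.trans hdb)
      have e1 := hgd _ hp'
      have e2 := hhd _ hp'
      dsimp only at e1 e2
      have hIg : IntervalIntegrable (fun t => g (γ t) * deriv γ t) volume c' d' := by
        rw [intervalIntegrable_iff_integrableOn_Ioc_of_le h2]
        exact hintOn g Mg hg hMg c' d' (hac.trans h1) h2 (h3.trans hdb)
      have hIh : IntervalIntegrable (fun t => h (γ t) * deriv γ t) volume c' d' := by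
        rw [intervalIntegrable_iff_integrableOn_Ioc_of_le h2]
        exact hintOn h Mh hh hMh c' d' (hac.trans h1) h2 (h3.trans hdb)
      rw [← intervalIntegral.integral_of_le h2]
      have hsplit : ∫ t in c'..d', Φ0 t =
          (∫ t in c'..d', g (γ t) * deriv γ t) - ∫ t in c'..d', h (γ t) * deriv γ t := by
        rw [← intervalIntegral.integral_sub hIg hIh]
        apply intervalIntegral.integral_congr
        intro t _
        simp only [hΦ0def, hφdef, sub_mul]
      rw [hsplit, e1, e2, sub_self]
  have hInd : Integrable ((Set.Ioc c d).indicator Φ0) volume := by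
    rw [integrable_indicator_iff measurableSet_Ioc]
    exact hintOn φ (Mg + Mh) hφc hφbd c d hac hcd.le hdb
  have haez := ae_zero_of_integral_Ioc_zero hcd hInd hzero
  have hrad := hlip.ae_differentiableWithinAt_of_mem (μ := volume)
  have hae0 : ∀ᵐ t : ℝ, t ∈ Set.Ioo c d → HasDerivAt γ 0 t := by
    filter_upwards [haez, hrad] with t h1 h2 ht
    have htab : t ∈ Set.Ioo a b := ⟨lt_of_le_of_lt hac ht.1, lt_of_lt_of_le ht.2 hdb⟩
    have hnhds : Set.Icc a b ∈ nhds t := Icc_mem_nhds htab.1 htab.2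
    have hdiff : DifferentiableAt ℝ γ t :=
      (h2 (Set.Ioo_subset_Icc_self htab)).differentiableAt hnhds
    have hder0 : deriv γ t = 0 := by
      have hφne : φ (γ t) ≠ 0 := by
        have hk := (hkey t (Set.Ioo_subset_Icc_self ht)).2
        intro hcontra
        rw [hcontra, norm_zero] at hk
        linarith
      rcases mul_eq_zero.1 (h1 ht) with hcase | hcase
      · exact absurd hcase hφne
      · exact hcase
    have hhd := hdiff.hasDerivAt
    rwa [hder0] at hhd
  have hconst := const_of_ae_deriv_zero hcd (hlip.mono hsubI) hae0
  obtain ⟨s, hs, t, ht, hst⟩ := hadm c d hac hcd hdb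
  exact hst (by rw [hconst hs, hconst ht])
end

section
/- Let X ⊆ ℂ be a compact set and let F be an effective collection of Lipschitz paths in X. Let f₁, f₂, g₁, g₂ : ℂ → ℂ be continuous on X, with g₁ an F-derivative of f₁ and g₂ an F-derivative of f₂. Then f₁·g₂ + g₁·f₂ is an F-derivative of the product f₁·f₂. -/
open Set intervalIntegral Filter
open MeasureTheory

set_option maxHeartbeats 1000000

/-- Product rule for `F`-derivatives. -/
theorem fDeriv_mul (X : Set ℂ) (hX : IsCompact X)
    (F : Set PathData) (hF : Effective X F)
    (f₁ f₂ g₁ g₂ : ℂ → ℂ)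
    (hf₁ : ContinuousOn f₁ X) (hf₂ : ContinuousOn f₂ X)
    (hg₁ : ContinuousOn g₁ X) (hg₂ : ContinuousOn g₂ X)
    (hd₁ : IsFDeriv F f₁ g₁) (hd₂ : IsFDeriv F f₂ g₂) :
    IsFDeriv F (fun x => f₁ x * f₂ x) (fun x => f₁ x * g₂ x + g₁ x * f₂ x) := by
  rintro ⟨γ, a, b⟩ hp
  obtain ⟨⟨hab, ⟨K, hK⟩, himg⟩, -⟩ := hF.1 _ hp
  dsimp only at hab hK himg ⊢
  have hγX : ∀ t ∈ Icc a b, γ t ∈ X := fun t ht => himg ⟨t, ht, rfl⟩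
  obtain ⟨C₁, hC₁⟩ := hX.exists_bound_of_continuousOn hg₁
  obtain ⟨C₂, hC₂⟩ := hX.exists_bound_of_continuousOn hg₂
  obtain ⟨D₁, hD₁⟩ := hX.exists_bound_of_continuousOn hf₁
  have haX : γ a ∈ X := hγX a ⟨le_rfl, hab.le⟩
  have hC₁0 : 0 ≤ C₁ := le_trans (norm_nonneg _) (hC₁ _ haX)
  have hC₂0 : 0 ≤ C₂ := le_trans (norm_nonneg _) (hC₂ _ haX)
  have hD₁0 : 0 ≤ D₁ := le_trans (norm_nonneg _) (hD₁ _ haX)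
  have hKd : ∀ t ∈ Ioo a b, ‖deriv γ t‖ ≤ K := fun t ht =>
    norm_deriv_le_of_lipschitzOn (Icc_mem_nhds ht.1 ht.2) hK
  set μ := volume.restrict (Ioc a b) with hμdef
  haveI : IsFiniteMeasure μ := ⟨by rw [hμdef, Measure.restrict_apply_univ]; exact measure_Ioc_lt_top⟩
  set u₁ : ℝ → ℂ := fun t => g₁ (γ t) * deriv γ t with hu₁def
  set u₂ : ℝ → ℂ := fun t => g₂ (γ t) * deriv γ t with hu₂def
  set v₁ : ℝ → ℂ := (Ioo a b).indicator u₁ with hv₁def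
  set v₂ : ℝ → ℂ := (Ioo a b).indicator u₂ with hv₂def
  have hμIoo : μ = volume.restrict (Ioo a b) := (Measure.restrict_congr_set Ioo_ae_eq_Ioc).symm
  have hIoo : ∀ᵐ t ∂μ, t ∈ Ioo a b := by
    rw [hμIoo]; exact ae_restrict_mem measurableSet_Ioo
  have hvu₁ : v₁ =ᵐ[μ] u₁ := hIoo.mono fun t ht => indicator_of_mem ht _
  have hvu₂ : v₂ =ᵐ[μ] u₂ := hIoo.mono fun t ht => indicator_of_mem ht _
  have hγc : ContinuousOn γ (Icc a b) := hK.continuousOn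
  have hm : ∀ h : ℂ → ℂ, ContinuousOn h X → AEStronglyMeasurable (fun t => h (γ t)) μ :=
    fun h hh => ((hh.comp hγc hγX).mono Ioc_subset_Icc_self).aestronglyMeasurable measurableSet_Ioc
  have hdm : AEStronglyMeasurable (deriv γ) μ := (measurable_deriv γ).aestronglyMeasurable
  have hmu₁ : AEStronglyMeasurable u₁ μ := (hm g₁ hg₁).mul hdm
  have hmu₂ : AEStronglyMeasurable u₂ μ := (hm g₂ hg₂).mul hdm
  have hmv₁ : AEStronglyMeasurable v₁ μ := hmu₁.indicator measurableSet_Ioo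
  have hmv₂ : AEStronglyMeasurable v₂ μ := hmu₂.indicator measurableSet_Ioo
  have hbu₁ : ∀ t ∈ Ioo a b, ‖u₁ t‖ ≤ C₁ * K := fun t ht => by
    rw [hu₁def, norm_mul]
    exact mul_le_mul (hC₁ _ (hγX t (Ioo_subset_Icc_self ht))) (hKd t ht) (norm_nonneg _) hC₁0
  have hbu₂ : ∀ t ∈ Ioo a b, ‖u₂ t‖ ≤ C₂ * K := fun t ht => by
    rw [hu₂def, norm_mul]
    exact mul_le_mul (hC₂ _ (hγX t (Ioo_subset_Icc_self ht))) (hKd t ht) (norm_nonneg _) hC₂0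
  have hbv₁ : ∀ t, ‖v₁ t‖ ≤ C₁ * K := by
    intro t
    by_cases ht : t ∈ Ioo a b
    · rw [hv₁def, indicator_of_mem ht]; exact hbu₁ t ht
    · rw [hv₁def, indicator_of_notMem ht, norm_zero]; positivity
  have hbv₂ : ∀ t, ‖v₂ t‖ ≤ C₂ * K := by
    intro t
    by_cases ht : t ∈ Ioo a b
    · rw [hv₂def, indicator_of_mem ht]; exact hbu₂ t ht
    · rw [hv₂def, indicator_of_notMem ht, norm_zero]; positivity
  have hiu₁ : Integrable u₁ μ :=
    (((integrable_const (C₁ * K)).mono' hmv₁ (.of_forall hbv₁)).congr hvu₁)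
  have hiu₂ : Integrable u₂ μ :=
    (((integrable_const (C₂ * K)).mono' hmv₂ (.of_forall hbv₂)).congr hvu₂)
  have hi₁ : Integrable (fun t => f₁ (γ t) * u₂ t) μ := by
    refine (integrable_const (D₁ * (C₂ * K))).mono' ((hm f₁ hf₁).mul hmu₂) ?_
    filter_upwards [hIoo] with t ht
    rw [norm_mul]
    exact mul_le_mul (hD₁ _ (hγX t (Ioo_subset_Icc_self ht))) (hbu₂ t ht) (norm_nonneg _) hD₁0
  have hi₂ : Integrable (fun t => u₁ t * f₂ (γ t)) μ := by
    obtain ⟨D₂, hD₂⟩ := hX.exists_bound_of_continuousOn hf₂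
    have hD₂0 : 0 ≤ D₂ := le_trans (norm_nonneg _) (hD₂ _ haX)
    refine (integrable_const ((C₁ * K) * D₂)).mono' (hmu₁.mul (hm f₂ hf₂)) ?_
    filter_upwards [hIoo] with t ht
    rw [norm_mul]
    exact mul_le_mul (hbu₁ t ht) (hD₂ _ (hγX t (Ioo_subset_Icc_self ht))) (norm_nonneg _)
      (by positivity)
  have FTC : ∀ f g : ℂ → ℂ, IsFDeriv F f g → ∀ c d, a ≤ c → c ≤ d → d ≤ b →
      (∫ t in Ioc c d, g (γ t) * deriv γ t) = f (γ d) - f (γ c) := by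
    intro f g hfg c d hac hcd hdb
    rcases eq_or_lt_of_le hcd with rfl | hlt
    · simp
    · rw [← intervalIntegral.integral_of_le hlt.le]
      simpa using hfg _ (hF.2.1 _ hp c d hac hlt hdb)
  have hbne : ∀ᵐ t : ℝ, t ≠ b := by
    rw [ae_iff]
    simpa [not_not, Set.setOf_eq_eq_singleton] using measure_singleton (α := ℝ) b
  set Φ : ℝ × ℝ → ℂ := fun q => if q.1 ≤ q.2 then v₁ q.1 * v₂ q.2 else 0 with hΦdef
  have hΦm : AEStronglyMeasurable Φ (μ.prod μ) := by
    have h1 : Φ = {q : ℝ × ℝ | q.1 ≤ q.2}.indicator (fun q => v₁ q.1 * v₂ q.2) := by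
      funext q; by_cases h : q.1 ≤ q.2 <;> simp [hΦdef, h, indicator_apply]
    rw [h1]
    exact ((hmv₁.comp_fst (ν := μ)).mul (hmv₂.comp_snd (μ := μ))).indicator (measurableSet_le measurable_fst measurable_snd)
  have hΦi : Integrable Φ (μ.prod μ) := by
    refine (integrable_const ((C₁ * K) * (C₂ * K))).mono' hΦm (.of_forall fun q => ?_)
    rw [hΦdef]; dsimp only
    split_ifs with h
    · rw [norm_mul]
      exact mul_le_mul (hbv₁ _) (hbv₂ _) (norm_nonneg _) (by positivity)
    · rw [norm_zero]; positivity
  have swap := MeasureTheory.integral_integral_swap (f := fun s t => Φ (s, t))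
    (μ := μ) (ν := μ) (by exact hΦi)
  have hA : ∀ᵐ s ∂μ, (∫ t, Φ (s, t) ∂μ) = u₁ s * (f₂ (γ b) - f₂ (γ s)) := by
    filter_upwards [hIoo, hvu₁] with s hs hvus
    have h1 : (fun t => Φ (s, t)) = (Ici s).indicator (fun t => v₁ s * v₂ t) := by
      funext t; by_cases h : s ≤ t <;> simp [hΦdef, h, indicator_apply]
    rw [h1, MeasureTheory.integral_indicator measurableSet_Ici, Measure.restrict_restrict measurableSet_Ici,
      MeasureTheory.integral_const_mul]
    have h2 : Ici s ∩ Ioc a b = Icc s b := by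
      ext x
      simp only [mem_inter_iff, mem_Ici, mem_Ioc, mem_Icc]
      constructor
      · rintro ⟨hx1, _, hx3⟩; exact ⟨hx1, hx3⟩
      · rintro ⟨hx1, hx2⟩; exact ⟨hx1, lt_of_lt_of_le hs.1 hx1, hx2⟩
    rw [h2, hvus]
    congr 1
    rw [← Measure.restrict_congr_set Ioc_ae_eq_Icc]
    have h3 : (∫ t in Ioc s b, v₂ t) = ∫ t in Ioc s b, u₂ t :=
      setIntegral_congr_ae measurableSet_Ioc (hbne.mono fun x hx hmem =>
        indicator_of_mem (mem_Ioo.mpr ⟨hs.1.trans hmem.1, lt_of_le_of_ne hmem.2 hx⟩) _)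
    rw [h3]
    exact FTC f₂ g₂ hd₂ s b hs.1.le hs.2.le le_rfl
  have hB : ∀ᵐ t ∂μ, (∫ s, Φ (s, t) ∂μ) = (f₁ (γ t) - f₁ (γ a)) * u₂ t := by
    filter_upwards [hIoo, hvu₂] with t ht hvut
    have h1 : (fun s => Φ (s, t)) = (Iic t).indicator (fun s => v₁ s * v₂ t) := by
      funext s; by_cases h : s ≤ t <;> simp [hΦdef, h, indicator_apply]
    rw [h1, MeasureTheory.integral_indicator measurableSet_Iic, Measure.restrict_restrict measurableSet_Iic,
      MeasureTheory.integral_mul_const]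
    have h2 : Iic t ∩ Ioc a b = Ioc a t := by
      ext x
      simp only [mem_inter_iff, mem_Iic, mem_Ioc]
      constructor
      · rintro ⟨hx1, hx2, _⟩; exact ⟨hx2, hx1⟩
      · rintro ⟨hx1, hx2⟩; exact ⟨hx2, hx1, hx2.trans ht.2.le⟩
    rw [h2, hvut]
    congr 1
    have h3 : (∫ s in Ioc a t, v₁ s) = ∫ s in Ioc a t, u₁ s :=
      setIntegral_congr_ae measurableSet_Ioc (.of_forall fun x hmem =>
        indicator_of_mem (mem_Ioo.mpr ⟨hmem.1, lt_of_le_of_lt hmem.2 ht.2⟩) _)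
    rw [h3]
    exact FTC f₁ g₁ hd₁ a t le_rfl ht.1.le ht.2.le
  have hInt₁ : (∫ t, u₁ t ∂μ) = f₁ (γ b) - f₁ (γ a) := FTC f₁ g₁ hd₁ a b le_rfl hab.le le_rfl
  have hInt₂ : (∫ t, u₂ t ∂μ) = f₂ (γ b) - f₂ (γ a) := FTC f₂ g₂ hd₂ a b le_rfl hab.le le_rfl
  have hAint : (∫ s, ∫ t, Φ (s, t) ∂μ ∂μ)
      = (f₁ (γ b) - f₁ (γ a)) * f₂ (γ b) - ∫ s, u₁ s * f₂ (γ s) ∂μ := by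
    rw [integral_congr_ae hA]
    have h4 : ∀ s, u₁ s * (f₂ (γ b) - f₂ (γ s)) = u₁ s * f₂ (γ b) - u₁ s * f₂ (γ s) :=
      fun s => by ring
    simp_rw [h4]
    rw [integral_sub (hiu₁.mul_const _) hi₂, MeasureTheory.integral_mul_const, hInt₁]
  have hBint : (∫ t, ∫ s, Φ (s, t) ∂μ ∂μ)
      = (∫ t, f₁ (γ t) * u₂ t ∂μ) - f₁ (γ a) * (f₂ (γ b) - f₂ (γ a)) := by
    rw [integral_congr_ae hB]
    have h4 : ∀ t, (f₁ (γ t) - f₁ (γ a)) * u₂ t = f₁ (γ t) * u₂ t - f₁ (γ a) * u₂ t :=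
      fun t => by ring
    simp_rw [h4]
    rw [integral_sub hi₁ (hiu₂.const_mul _), MeasureTheory.integral_const_mul, hInt₂]
  rw [hAint, hBint] at swap
  rw [intervalIntegral.integral_of_le hab.le]
  have hgoal : (∫ t in Ioc a b, (f₁ (γ t) * g₂ (γ t) + g₁ (γ t) * f₂ (γ t)) * deriv γ t)
      = (∫ t, f₁ (γ t) * u₂ t ∂μ) + ∫ t, u₁ t * f₂ (γ t) ∂μ := by
    rw [← integral_add hi₁ hi₂]
    exact integral_congr_ae (.of_forall fun t => by rw [hu₁def, hu₂def]; ring)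
  rw [hgoal]  -- may need shape adjustment
  linear_combination -swap
end

section
/- Let X ⊆ ℂ be a compact set and let F and G be effective collections of Lipschitz paths in X. Then the following are equivalent: (i) for all continuous functions f, g on X, if g is an F-derivative of f then g is a G-derivative of f; (ii) G^max ⊆ F^max. -/
open Set intervalIntegral Filter

/-- Every `F`-derivative pair is a `G`-derivative pair iff
`G^max ⊆ F^max`. -/
theorem fDeriv_mono_iff_maxColl_subset (X : Set ℂ) (hX : IsCompact X)
    (F G : Set PathData) (hF : Effective X F) (hG : Effective X G) :
    (∀ f g : ℂ → ℂ, ContinuousOn f X → ContinuousOn g X →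
        IsFDeriv F f g → IsFDeriv G f g) ↔
      MaxColl X G ⊆ MaxColl X F := by
  constructor
  · intro h p hp
    obtain ⟨h1, h2, h3⟩ := hp
    exact ⟨h1, h2, fun f g hf hg hFd => h3 f g hf hg (h f g hf hg hFd)⟩
  · intro h f g hf hg hFd p hp
    have hpG : p ∈ MaxColl X G := by
      refine ⟨(hG.1 p hp).1, (hG.1 p hp).2, fun f' g' hf' hg' hGd => ?_⟩
      intro c d hac hcd hdb
      rcases eq_or_lt_of_le hcd with rfl | hlt
      · simp
      · exact hGd (p.1, c, d) (hG.2.1 p hp c d hac hlt hdb)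
    have hpF : p ∈ MaxColl X F := h hpG
    exact hpF.2.2 f g hf hg hFd p.2.1 p.2.2 le_rfl hpF.1.1.le le_rfl
end

section
/- Let γ : ℝ → ℂ be Lipschitz on [a,b] (a < b), and let ρ : ℝ → ℝ be Lipschitz and monotone nondecreasing on [c,d] (c < d) with ρ(c) = a, ρ(d) = b and ρ([c,d]) ⊆ [a,b]. Then γ ∘ ρ is Lipschitz on [c,d], and for every function f : ℂ → ℂ continuous on γ([a,b]) one has ∫ t in c..d, f(γ(ρ t)) * deriv (γ ∘ ρ) t = ∫ s in a..b, f(γ s) * deriv γ s. (This expresses the invariance of the contour integral under reparametrisation, e.g. passing to the path length or normalised path length parametrisation.) -/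
open Set intervalIntegral Filter

section Helpers

open Set MeasureTheory Filter Topology

lemma lipNullImage {K : NNReal} {ρ : ℝ → ℝ} (hρ : LipschitzWith K ρ) {N : Set ℝ}
    (hN : volume N = 0) : volume (ρ '' N) = 0 := by
  have h := hρ.hausdorffMeasure_image_le (zero_le_one) N
  rw [MeasureTheory.hausdorffMeasure_real] at h
  simp [hN] at h
  exact h

/-- If a monotone function is constant to the right and differentiable, its derivative is 0. -/
lemma deriv_zero_of_const_right {ρ : ℝ → ℝ} (hmono : Monotone ρ) {t₁ t₂ : ℝ}
    (h12 : t₁ < t₂) (heq : ρ t₁ = ρ t₂) (hd : DifferentiableAt ℝ ρ t₁) : deriv ρ t₁ = 0 := by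
  have H : Tendsto (slope ρ t₁) (𝓝[≠] t₁) (𝓝 (deriv ρ t₁)) :=
    hasDerivAt_iff_tendsto_slope.1 hd.hasDerivAt
  have H' : Tendsto (slope ρ t₁) (𝓝[>] t₁) (𝓝 (deriv ρ t₁)) :=
    H.mono_left (nhdsWithin_mono _ (fun x hx => ne_of_gt hx))
  have He : slope ρ t₁ =ᶠ[𝓝[>] t₁] (fun _ => (0 : ℝ)) := by
    filter_upwards [Ioo_mem_nhdsGT_of_mem ⟨le_refl t₁, h12⟩] with u hu
    have h1 : ρ t₁ ≤ ρ u := hmono hu.1.le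
    have h2 : ρ u ≤ ρ t₂ := hmono hu.2.le
    have h3 : ρ u = ρ t₁ := le_antisymm (heq ▸ h2) h1
    simp [slope, h3]
  exact tendsto_nhds_unique (H'.congr' He) tendsto_const_nhds

lemma mono_deriv_nonneg {ρ : ℝ → ℝ} (hmono : Monotone ρ) (t : ℝ) : 0 ≤ deriv ρ t := by
  by_cases hd : DifferentiableAt ℝ ρ t
  · have H : Tendsto (slope ρ t) (𝓝[>] t) (𝓝 (deriv ρ t)) :=
      (hasDerivAt_iff_tendsto_slope.1 hd.hasDerivAt).mono_left
        (nhdsWithin_mono _ (fun x hx => ne_of_gt hx))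
    refine ge_of_tendsto H ?_
    filter_upwards [self_mem_nhdsWithin] with u hu
    have : (0:ℝ) < u - t := sub_pos.2 hu
    have h2 : ρ t ≤ ρ u := hmono (le_of_lt hu)
    rw [slope_def_field]
    exact div_nonneg (sub_nonneg.2 h2) this.le
  · simp [deriv_zero_of_not_differentiableAt hd]

/-- Composition of a Lipschitz map with a function with zero derivative has zero derivative. -/
lemma comp_hasDerivAt_zero {K : NNReal} {γ : ℝ → ℂ} (hγ : LipschitzWith K γ) {ρ : ℝ → ℝ} {t : ℝ}
    (hρ0 : HasDerivAt ρ 0 t) : HasDerivAt (γ ∘ ρ) 0 t := by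
  rw [hasDerivAt_iff_tendsto] at hρ0 ⊢
  simp only [smul_zero, sub_zero, Function.comp] at hρ0 ⊢
  have hK : Tendsto (fun u => (K:ℝ) * (‖u - t‖⁻¹ * ‖ρ u - ρ t‖)) (𝓝 t) (𝓝 0) := by
    simpa using hρ0.const_mul (K:ℝ)
  refine squeeze_zero (fun u => by positivity) (fun u => ?_) hK
  have h1 : ‖γ (ρ u) - γ (ρ t)‖ ≤ (K:ℝ) * ‖ρ u - ρ t‖ := by
    have := hρ0
    have h := hγ.dist_le_mul (ρ u) (ρ t)
    rwa [dist_eq_norm, dist_eq_norm] at h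
  calc ‖u - t‖⁻¹ * ‖γ (ρ u) - γ (ρ t)‖ ≤ ‖u - t‖⁻¹ * ((K:ℝ) * ‖ρ u - ρ t‖) := by
        apply mul_le_mul_of_nonneg_left h1 (by positivity)
    _ = (K:ℝ) * (‖u - t‖⁻¹ * ‖ρ u - ρ t‖) := by ring

/-- Injectivity of a monotone function on the set where its derivative is positive. -/
lemma injOn_pos_deriv {ρ : ℝ → ℝ} (hmono : Monotone ρ) {S : Set ℝ}
    (hS : ∀ t ∈ S, DifferentiableAt ℝ ρ t ∧ 0 < deriv ρ t) : InjOn ρ S := by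
  intro t₁ h1 t₂ h2 heq
  rcases lt_trichotomy t₁ t₂ with h | h | h
  · exact absurd (deriv_zero_of_const_right hmono h heq (hS t₁ h1).1)
      (ne_of_gt (hS t₁ h1).2)
  · exact h
  · exact absurd (deriv_zero_of_const_right hmono h heq.symm (hS t₂ h2).1)
      (ne_of_gt (hS t₂ h2).2)

/-- Sard-type: image of the zero-derivative set is null. -/
lemma sard_zero_deriv {K : NNReal} {ρ : ℝ → ℝ} (hρ : LipschitzWith K ρ) :
    volume (ρ '' {t | DifferentiableAt ℝ ρ t ∧ deriv ρ t = 0}) = 0 := by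
  set Z := {t | DifferentiableAt ℝ ρ t ∧ deriv ρ t = 0} with hZdef
  have hZm : MeasurableSet Z := by
    exact (measurableSet_of_differentiableAt ℝ ρ).inter
      ((measurable_deriv ρ) (measurableSet_singleton (0:ℝ)))
  have h := MeasureTheory.addHaar_image_le_lintegral_abs_det_fderiv volume hZm
    (f' := fun t => (1 : ℝ →L[ℝ] ℝ).smulRight (deriv ρ t))
    (fun t ht => (ht.1.hasDerivAt.hasFDerivAt).hasFDerivWithinAt)
  refine le_antisymm (h.trans ?_) (zero_le)
  have heq : ∫⁻ t in Z, ENNReal.ofReal |((1 : ℝ →L[ℝ] ℝ).smulRight (deriv ρ t)).det| ∂volume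
      = ∫⁻ _ in Z, 0 ∂volume := by
    apply MeasureTheory.setLIntegral_congr_fun hZm
    intro t ht
    simp [ContinuousLinearMap.smulRight_one_eq_toSpanSingleton, ContinuousLinearMap.det_toSpanSingleton, ht.2]
  rw [heq]; simp

/-- The preimage of a null set under a monotone function, intersected with the set where the
derivative exists and is positive, is null. -/
lemma null_preimage {ρ : ℝ → ℝ} (hcont : Continuous ρ) (hmono : Monotone ρ) {N : Set ℝ}
    (hNm : MeasurableSet N) (hN : volume N = 0) :
    volume ({t | DifferentiableAt ℝ ρ t ∧ 0 < deriv ρ t} ∩ ρ ⁻¹' N) = 0 := by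
  set A := {t | DifferentiableAt ℝ ρ t ∧ 0 < deriv ρ t} ∩ ρ ⁻¹' N with hAdef
  have hAm : MeasurableSet A :=
    ((measurableSet_of_differentiableAt ℝ ρ).inter
      ((measurable_deriv ρ) measurableSet_Ioi)).inter (hcont.measurable hNm)
  have hInj : InjOn ρ A := injOn_pos_deriv hmono (fun t ht => ht.1)
  have h := MeasureTheory.lintegral_abs_det_fderiv_le_addHaar_image volume hAm
    (f' := fun t => (1 : ℝ →L[ℝ] ℝ).smulRight (deriv ρ t))
    (fun t ht => (ht.1.1.hasDerivAt.hasFDerivAt).hasFDerivWithinAt) hInj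
  have himg : volume (ρ '' A) = 0 :=
    measure_mono_null (by rintro x ⟨t, ht, rfl⟩; exact ht.2) hN
  rw [himg] at h
  have h0 : ∫⁻ t in A, ENNReal.ofReal |deriv ρ t| ∂volume = 0 := by
    refine le_antisymm ?_ (zero_le)
    refine le_trans (le_of_eq ?_) h
    apply MeasureTheory.setLIntegral_congr_fun hAm
    intro t ht
    simp [ContinuousLinearMap.smulRight_one_eq_toSpanSingleton, ContinuousLinearMap.det_toSpanSingleton]
  rw [MeasureTheory.lintegral_eq_zero_iff
    (by exact ENNReal.measurable_ofReal.comp (measurable_deriv ρ).abs)] at h0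
  have h1 : ∀ᵐ t ∂(volume : Measure ℝ), t ∈ A → ENNReal.ofReal |deriv ρ t| = 0 :=
    (MeasureTheory.ae_restrict_iff' hAm).1 h0
  refine measure_mono_null (fun t ht => ?_) (MeasureTheory.ae_iff.mp h1)
  intro himp
  have h2 := himp ht
  exact (ne_of_gt (ENNReal.ofReal_pos.2 (abs_pos.2 (ne_of_gt ht.1.2)))) h2

lemma key {γ : ℝ → ℂ} {K : NNReal} (hγ : LipschitzWith K γ)
    {ρ : ℝ → ℝ} {K' : NNReal} (hρ : LipschitzWith K' ρ) (hmono : Monotone ρ)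
    {a b c d : ℝ} (hab : a < b) (hcd : c < d) (hρc : ρ c = a) (hρd : ρ d = b)
    (hρim : ∀ t, ρ t ∈ Set.Icc a b) (f : ℂ → ℂ) :
    (∫ t in c..d, f (γ (ρ t)) * deriv (γ ∘ ρ) t) = ∫ s in a..b, f (γ s) * deriv γ s := by
  set h : ℝ → ℂ := fun x => f (γ x) * deriv γ x with hdef
  set Nγ : Set ℝ := {x | ¬ DifferentiableAt ℝ γ x} with hNγdef
  have hNγm : MeasurableSet Nγ := (measurableSet_of_differentiableAt ℝ γ).compl
  have hNγ0 : volume Nγ = 0 := by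
    rw [MeasureTheory.measure_eq_zero_iff_ae_notMem]
    filter_upwards [hγ.ae_differentiableAt] with x hx
    simpa [hNγdef] using hx
  set S : Set ℝ := (Set.Ioo c d ∩ {t | DifferentiableAt ℝ ρ t ∧ 0 < deriv ρ t}) \ ρ ⁻¹' Nγ
    with hSdef
  have hSm : MeasurableSet S :=
    (measurableSet_Ioo.inter ((measurableSet_of_differentiableAt ℝ ρ).inter
      ((measurable_deriv ρ) measurableSet_Ioi))).diff (hρ.continuous.measurable hNγm)
  have hInj : InjOn ρ S := injOn_pos_deriv hmono (fun t ht => ht.1.2)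
  have hA0 : volume ({t | DifferentiableAt ℝ ρ t ∧ 0 < deriv ρ t} ∩ ρ ⁻¹' Nγ) = 0 :=
    null_preimage hρ.continuous hmono hNγm hNγ0
  -- a.e. pointwise identity
  have hpt : ∀ᵐ t ∂(volume : MeasureTheory.Measure ℝ), t ∈ Set.Ioo c d →
      f (γ (ρ t)) * deriv (γ ∘ ρ) t
        = S.indicator (fun t => |deriv ρ t| • h (ρ t)) t := by
    filter_upwards [hρ.ae_differentiableAt,
      (MeasureTheory.measure_eq_zero_iff_ae_notMem).1 hA0] with t hdiff hA ht
    rcases eq_or_lt_of_le (mono_deriv_nonneg hmono t) with hzero | hpos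
    · have hc : HasDerivAt (γ ∘ ρ) 0 t :=
        comp_hasDerivAt_zero hγ (hzero ▸ hdiff.hasDerivAt)
      have htS : t ∉ S := fun hS => absurd hzero (ne_of_lt hS.1.2.2)
      simp [hc.deriv, Set.indicator_of_notMem htS]
    · have hpre : ρ t ∉ Nγ := fun hmem => hA ⟨⟨hdiff, hpos⟩, hmem⟩
      have hgdiff : DifferentiableAt ℝ γ (ρ t) := not_not.1 hpre
      have htS : t ∈ S := ⟨⟨ht, hdiff, hpos⟩, hpre⟩
      have hc : HasDerivAt (γ ∘ ρ) (deriv ρ t • deriv γ (ρ t)) t :=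
        HasDerivAt.scomp t hgdiff.hasDerivAt hdiff.hasDerivAt
      rw [hc.deriv, Set.indicator_of_mem htS, abs_of_pos hpos, hdef]
      simp only [Complex.real_smul]
      ring
  -- image of S is a.e. the interval
  have himg_sub : Set.Icc a b ⊆ ρ '' Set.Icc c d := by
    have := intermediate_value_Icc hcd.le hρ.continuous.continuousOn
    rwa [hρc, hρd] at this
  have hae_sets : ρ '' S =ᵐ[volume] Set.Ioc a b := by
    have hbad : volume (Set.Ioc a b \ ρ '' S) = 0 := by
      set B1 : Set ℝ := {t | ¬ DifferentiableAt ℝ ρ t} with hB1def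
      set Z : Set ℝ := {t | DifferentiableAt ℝ ρ t ∧ deriv ρ t = 0} with hZdef
      set A : Set ℝ := {t | DifferentiableAt ℝ ρ t ∧ 0 < deriv ρ t} ∩ ρ ⁻¹' Nγ with hAdef
      have hsub : Set.Ioc a b \ ρ '' S ⊆
          ρ '' ({c, d} : Set ℝ) ∪ (ρ '' B1 ∪ (ρ '' Z ∪ ρ '' A)) := by
        intro x hx
        obtain ⟨t, htcd, rfl⟩ := himg_sub (Set.Ioc_subset_Icc_self hx.1)
        have htS : t ∉ S := fun hS => hx.2 ⟨t, hS, rfl⟩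
        by_cases h1 : DifferentiableAt ℝ ρ t
        · by_cases h2 : t ∈ Set.Ioo c d
          · rcases eq_or_lt_of_le (mono_deriv_nonneg hmono t) with hzero | hpos
            · exact Or.inr (Or.inr (Or.inl ⟨t, ⟨h1, hzero.symm⟩, rfl⟩))
            · have hpre : ρ t ∈ Nγ := by
                by_contra hpre
                exact htS ⟨⟨h2, h1, hpos⟩, hpre⟩
              exact Or.inr (Or.inr (Or.inr ⟨t, ⟨⟨h1, hpos⟩, hpre⟩, rfl⟩))
          · have : t = c ∨ t = d := by
              rcases eq_or_lt_of_le htcd.1 with hc' | hc'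
              · exact Or.inl hc'.symm
              rcases eq_or_lt_of_le htcd.2 with hd' | hd'
              · exact Or.inr hd'
              · exact absurd ⟨hc', hd'⟩ h2
            exact Or.inl ⟨t, by simpa using this, rfl⟩
        · exact Or.inr (Or.inl ⟨t, h1, rfl⟩)
      refine measure_mono_null hsub ?_
      have hB1null : volume {t | ¬ DifferentiableAt ℝ ρ t} = 0 := by
        rw [MeasureTheory.measure_eq_zero_iff_ae_notMem]
        filter_upwards [hρ.ae_differentiableAt] with x hx
        simpa using hx
      refine MeasureTheory.measure_union_null ?_
        (MeasureTheory.measure_union_null (lipNullImage hρ hB1null)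
          (MeasureTheory.measure_union_null (sard_zero_deriv hρ) (lipNullImage hρ hA0)))
      have : ρ '' ({c, d} : Set ℝ) = {ρ c, ρ d} := Set.image_pair ρ c d
      rw [this]
      exact (Set.Finite.insert _ (Set.finite_singleton _)).measure_zero _
    have hbad2 : volume (ρ '' S \ Set.Ioc a b) = 0 := by
      refine measure_mono_null (fun x hx => ?_) (MeasureTheory.measure_singleton a)
      obtain ⟨⟨t, htS, rfl⟩, hnot⟩ := hx
      have hmem : ρ t ∈ Set.Icc a b := hρim t
      have : ρ t ≤ a := by
        by_contra hgt
        exact hnot ⟨lt_of_not_ge hgt, hmem.2⟩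
      exact le_antisymm this hmem.1
    rw [MeasureTheory.ae_eq_set]
    exact ⟨hbad2, hbad⟩
  -- the computation
  calc (∫ t in c..d, f (γ (ρ t)) * deriv (γ ∘ ρ) t)
      = ∫ t in Set.Ioc c d, f (γ (ρ t)) * deriv (γ ∘ ρ) t := intervalIntegral.integral_of_le hcd.le
    _ = ∫ t in Set.Ioo c d, f (γ (ρ t)) * deriv (γ ∘ ρ) t :=
        MeasureTheory.integral_Ioc_eq_integral_Ioo
    _ = ∫ t in Set.Ioo c d, S.indicator (fun t => |deriv ρ t| • h (ρ t)) t :=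
        MeasureTheory.setIntegral_congr_ae measurableSet_Ioo hpt
    _ = ∫ t in Set.Ioo c d ∩ S, |deriv ρ t| • h (ρ t) := MeasureTheory.setIntegral_indicator hSm
    _ = ∫ t in S, |deriv ρ t| • h (ρ t) := by
        rw [Set.inter_eq_self_of_subset_right (fun t ht => ht.1.1)]
    _ = ∫ x in ρ '' S, h x :=
        (MeasureTheory.integral_image_eq_integral_abs_deriv_smul hSm
          (fun t ht => ht.1.2.1.hasDerivAt.hasDerivWithinAt) hInj h).symm
    _ = ∫ x in Set.Ioc a b, h x := MeasureTheory.setIntegral_congr_set hae_sets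
    _ = ∫ s in a..b, f (γ s) * deriv γ s := (intervalIntegral.integral_of_le hab.le).symm

lemma intervalIntegral_congr_Ioo {F G : ℝ → ℂ} {c d : ℝ} (hcd : c ≤ d)
    (h : ∀ t ∈ Set.Ioo c d, F t = G t) : ∫ t in c..d, F t = ∫ t in c..d, G t := by
  rw [intervalIntegral.integral_of_le hcd, intervalIntegral.integral_of_le hcd,
    MeasureTheory.integral_Ioc_eq_integral_Ioo, MeasureTheory.integral_Ioc_eq_integral_Ioo]
  exact MeasureTheory.setIntegral_congr_fun measurableSet_Ioo h


end Helpers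

open MeasureTheory Topology in
/-- Invariance of the contour integral under monotone Lipschitz
reparametrisation. -/
theorem contourIntegral_reparam (γ : ℝ → ℂ) (a b : ℝ) (hab : a < b) (K : NNReal)
    (hγ : LipschitzOnWith K γ (Set.Icc a b))
    (ρ : ℝ → ℝ) (c d : ℝ) (hcd : c < d) (K' : NNReal)
    (hρ : LipschitzOnWith K' ρ (Set.Icc c d)) (hmono : MonotoneOn ρ (Set.Icc c d))
    (hρc : ρ c = a) (hρd : ρ d = b) (hρim : ρ '' Set.Icc c d ⊆ Set.Icc a b) :
    (∃ K'' : NNReal, LipschitzOnWith K'' (γ ∘ ρ) (Set.Icc c d)) ∧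
    ∀ f : ℂ → ℂ, ContinuousOn f (γ '' Set.Icc a b) →
      (∫ t in c..d, f (γ (ρ t)) * deriv (γ ∘ ρ) t) = ∫ s in a..b, f (γ s) * deriv γ s := by
  constructor
  · exact ⟨K * K', hγ.comp hρ (fun t ht => hρim ⟨t, ht, rfl⟩)⟩
  intro f _hf
  -- clamping functions
  set cl1 : ℝ → ℝ := fun t => max c (min t d) with hcl1def
  set cl2 : ℝ → ℝ := fun s => max a (min s b) with hcl2def
  set ρ1 : ℝ → ℝ := fun t => ρ (cl1 t) with hρ1def
  set γ1 : ℝ → ℂ := fun s => γ (cl2 s) with hγ1def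
  have hcl1mem : ∀ t, cl1 t ∈ Set.Icc c d :=
    fun t => ⟨le_max_left _ _, max_le hcd.le (min_le_right _ _)⟩
  have hcl2mem : ∀ s, cl2 s ∈ Set.Icc a b :=
    fun s => ⟨le_max_left _ _, max_le hab.le (min_le_right _ _)⟩
  have hcl1id : ∀ t ∈ Set.Icc c d, cl1 t = t := by
    intro t ht; simp [hcl1def, min_eq_left ht.2, max_eq_right ht.1]
  have hcl2id : ∀ s ∈ Set.Icc a b, cl2 s = s := by
    intro s hs; simp [hcl2def, min_eq_left hs.2, max_eq_right hs.1]
  have hcl1lip : LipschitzWith 1 cl1 := (LipschitzWith.id.min_const d).const_max c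
  have hcl2lip : LipschitzWith 1 cl2 := (LipschitzWith.id.min_const b).const_max a
  have hcl1mono : Monotone cl1 :=
    fun x y hxy => max_le_max le_rfl (min_le_min hxy le_rfl)
  have hρ1lip : LipschitzWith (K' * 1) ρ1 := by
    have h := hρ.comp (hcl1lip.lipschitzOnWith (s := Set.univ)) (fun t _ => hcl1mem t)
    exact lipschitzOnWith_univ.1 h
  have hγ1lip : LipschitzWith (K * 1) γ1 := by
    have h := hγ.comp (hcl2lip.lipschitzOnWith (s := Set.univ)) (fun s _ => hcl2mem s)
    exact lipschitzOnWith_univ.1 h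
  have hρ1mono : Monotone ρ1 :=
    fun x y hxy => hmono (hcl1mem x) (hcl1mem y) (hcl1mono hxy)
  have hρ1c : ρ1 c = a := by
    rw [hρ1def]; simp only []; rw [hcl1id c ⟨le_rfl, hcd.le⟩, hρc]
  have hρ1d : ρ1 d = b := by
    rw [hρ1def]; simp only []; rw [hcl1id d ⟨hcd.le, le_rfl⟩, hρd]
  have hρ1im : ∀ t, ρ1 t ∈ Set.Icc a b := fun t => hρim ⟨cl1 t, hcl1mem t, rfl⟩
  have hkey := key hγ1lip hρ1lip hρ1mono hab hcd hρ1c hρ1d hρ1im f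
  have hL : (∫ t in c..d, f (γ (ρ t)) * deriv (γ ∘ ρ) t)
      = ∫ t in c..d, f (γ1 (ρ1 t)) * deriv (γ1 ∘ ρ1) t := by
    apply intervalIntegral_congr_Ioo hcd.le
    intro t ht
    have h1 : ∀ u ∈ Set.Icc c d, (γ ∘ ρ) u = (γ1 ∘ ρ1) u := by
      intro u hu
      have h2 : ρ u ∈ Set.Icc a b := hρim ⟨u, hu, rfl⟩
      simp only [Function.comp_apply, hρ1def, hγ1def, hcl1id u hu, hcl2id _ h2]
    have heq : (γ ∘ ρ) =ᶠ[nhds t] (γ1 ∘ ρ1) :=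
      Filter.eventually_of_mem (Icc_mem_nhds ht.1 ht.2) h1
    have hval : γ (ρ t) = γ1 (ρ1 t) := h1 t (Set.Ioo_subset_Icc_self ht)
    rw [heq.deriv_eq, hval]
  have hR : (∫ s in a..b, f (γ s) * deriv γ s)
      = ∫ s in a..b, f (γ1 s) * deriv γ1 s := by
    apply intervalIntegral_congr_Ioo hab.le
    intro s hs
    have h1 : ∀ u ∈ Set.Icc a b, γ u = γ1 u := by
      intro u hu
      simp only [hγ1def, hcl2id u hu]
    have heq : γ =ᶠ[nhds s] γ1 :=
      Filter.eventually_of_mem (Icc_mem_nhds hs.1 hs.2) h1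
    rw [heq.deriv_eq, h1 s (Set.Ioo_subset_Icc_self hs)]
  rw [hL, hR]
  exact hkey
end

section
/- Let X ⊆ ℂ be a compact set, let γ : ℝ → ℂ be Lipschitz on [a,b] (a < b) with γ([a,b]) ⊆ X, and let φ, g : ℂ → ℂ be continuous on X with g a γ-derivative of φ on [a,b]. Then for every function f : ℂ → ℂ continuous on φ(γ([a,b])), writing σ := φ ∘ γ (which is Lipschitz on [a,b]), one has the change of variables formula ∫ t in a..b, f(φ(γ t)) * g(γ t) * deriv γ t = ∫ t in a..b, f(σ t) * deriv σ t; that is, ∫_γ (f ∘ φ)·g = ∫_{φ∘γ} f. -/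
open Set intervalIntegral Filter

open MeasureTheory Metric Topology


lemma ae_hasDerivAt_intervalIntegral (H : ℝ → ℂ) (hH : Integrable H) (a : ℝ) :
    ∀ᵐ x : ℝ, HasDerivAt (fun y => ∫ s in a..y, H s) (H x) x := by
  filter_upwards [IsUnifLocDoublingMeasure.ae_tendsto_average_norm_sub volume
      hH.locallyIntegrable 1] with x hx
  have hδ : Tendsto (fun y : ℝ => |y - x| / 2) (𝓝[≠] x) (𝓝[>] (0:ℝ)) := by
    rw [tendsto_nhdsWithin_iff]
    constructor
    · have : ContinuousAt (fun y : ℝ => |y - x| / 2) x := by fun_prop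
      simpa using this.tendsto.mono_left nhdsWithin_le_nhds
    · filter_upwards [self_mem_nhdsWithin] with y hy
      have : y - x ≠ 0 := sub_ne_zero.2 hy
      simp only [mem_Ioi]
      positivity
  have havg : Tendsto (fun y => ⨍ s in closedBall ((x+y)/2) (|y-x|/2), ‖H s - H x‖)
      (𝓝[≠] x) (𝓝 0) := by
    apply hx (fun y => (x+y)/2) (fun y => |y-x|/2) hδ
    filter_upwards with y
    rw [Metric.mem_closedBall, Real.dist_eq]
    have h1 : x - (x+y)/2 = (x - y)/2 := by ring
    rw [h1, abs_div, abs_sub_comm]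
    simp [abs_of_nonneg]
  rw [hasDerivAt_iff_tendsto_slope, tendsto_iff_norm_sub_tendsto_zero]
  apply squeeze_zero' ?_ ?_ havg
  · filter_upwards with y using norm_nonneg _
  · filter_upwards [self_mem_nhdsWithin] with y hy
    have hyx : y ≠ x := hy
    have hyx' : y - x ≠ 0 := sub_ne_zero.2 hyx
    have hint : ∀ c d : ℝ, IntervalIntegrable H volume c d := fun c d =>
      hH.intervalIntegrable
    have hFsub : (∫ s in a..y, H s) - (∫ s in a..x, H s) = ∫ s in x..y, H s :=
      integral_interval_sub_left (hint a y) (hint a x)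
    have hslope : slope (fun y => ∫ s in a..y, H s) x y - H x
        = (y - x)⁻¹ • (∫ s in x..y, (H s - H x)) := by
      rw [intervalIntegral.integral_sub (hint x y) intervalIntegrable_const,
        intervalIntegral.integral_const, slope_def_module, hFsub, smul_sub,
        inv_smul_smul₀ hyx']
    have hsub : Set.uIoc x y ⊆ closedBall ((x+y)/2) (|y-x|/2) := by
      rw [Real.closedBall_eq_Icc]
      rcases le_total x y with h | h
      · rw [uIoc_of_le h, abs_of_nonneg (by linarith)]
        intro s hs
        simp only [mem_Ioc, mem_Icc] at hs ⊢
        constructor <;> linarith [hs.1, hs.2]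
      · rw [uIoc_of_ge h, abs_of_nonpos (by linarith)]
        intro s hs
        simp only [mem_Ioc, mem_Icc] at hs ⊢
        constructor <;> linarith [hs.1, hs.2]
    have hmono : (∫ s in Set.uIoc x y, ‖H s - H x‖) ≤
        ∫ s in closedBall ((x+y)/2) (|y-x|/2), ‖H s - H x‖ := by
      have hi : IntegrableOn (fun s => ‖H s - H x‖) (closedBall ((x+y)/2) (|y-x|/2)) volume :=
        (hH.integrableOn.sub (integrableOn_const
          (measure_closedBall_lt_top).ne)).norm
      apply setIntegral_mono_set hi
      · filter_upwards with s using norm_nonneg _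
      · exact HasSubset.Subset.eventuallyLE hsub
    have hvol : (volume (closedBall ((x+y)/2) (|y-x|/2))).toReal = |y - x| := by
      rw [Real.volume_closedBall, ENNReal.toReal_ofReal (by positivity)]
      ring
    have havg_eq : (∫ s in closedBall ((x+y)/2) (|y-x|/2), ‖H s - H x‖)
        = |y - x| * ⨍ s in closedBall ((x+y)/2) (|y-x|/2), ‖H s - H x‖ := by
      rw [setAverage_eq, smul_eq_mul, measureReal_def, hvol, ← mul_assoc,
        mul_inv_cancel₀ (abs_ne_zero.2 hyx'), one_mul]
    rw [hslope, norm_smul, norm_inv, Real.norm_eq_abs]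
    calc |y - x|⁻¹ * ‖∫ s in x..y, (H s - H x)‖
        ≤ |y - x|⁻¹ * (|y - x| * ⨍ s in closedBall ((x+y)/2) (|y-x|/2), ‖H s - H x‖) := by
          apply mul_le_mul_of_nonneg_left _ (inv_nonneg.2 (abs_nonneg _))
          calc ‖∫ s in x..y, (H s - H x)‖ ≤ ∫ s in Set.uIoc x y, ‖H s - H x‖ :=
                intervalIntegral.norm_integral_le_integral_norm_uIoc
            _ ≤ _ := hmono
            _ = _ := havg_eq
      _ = ⨍ s in closedBall ((x+y)/2) (|y-x|/2), ‖H s - H x‖ := by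
          rw [← mul_assoc, inv_mul_cancel₀ (abs_ne_zero.2 hyx'), one_mul]

/-- Change of variables: `∫_γ (f ∘ φ)·g = ∫_{φ∘γ} f` when `g` is a
`γ`-derivative of `φ`. -/
theorem contourIntegral_comp (X : Set ℂ) (hX : IsCompact X)
    (γ : ℝ → ℂ) (a b : ℝ) (hab : a < b) (K : NNReal)
    (hγ : LipschitzOnWith K γ (Set.Icc a b)) (him : γ '' Set.Icc a b ⊆ X)
    (φ g : ℂ → ℂ) (hφ : ContinuousOn φ X) (hg : ContinuousOn g X)
    (hd : IsPathDeriv γ a b φ g)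
    (f : ℂ → ℂ) (hf : ContinuousOn f (φ '' (γ '' Set.Icc a b))) :
    (∫ t in a..b, f (φ (γ t)) * g (γ t) * deriv γ t) =
      ∫ t in a..b, f ((φ ∘ γ) t) * deriv (φ ∘ γ) t := by
  have hγc : ContinuousOn γ (Icc a b) := hγ.continuousOn
  have hmaps : MapsTo γ (Icc a b) X := fun t ht => him ⟨t, ht, rfl⟩
  have hgγ : ContinuousOn (fun t => g (γ t)) (Icc a b) := hg.comp hγc hmaps
  obtain ⟨M, hM⟩ := (isCompact_Icc).exists_bound_of_continuousOn hgγ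
  have hM0 : 0 ≤ M := le_trans (norm_nonneg _) (hM a ⟨le_refl a, hab.le⟩)
  have hderivb : ∀ t ∈ Ioo a b, ‖deriv γ t‖ ≤ K := by
    intro t ht
    by_cases hdiff : DifferentiableAt ℝ γ t
    · have h1 := hdiff.hasDerivAt.hasFDerivAt
      have h2 := h1.le_of_lipschitzOn (Icc_mem_nhds ht.1 ht.2) hγ
      rwa [ContinuousLinearMap.norm_toSpanSingleton] at h2
    · rw [deriv_zero_of_not_differentiableAt hdiff, norm_zero]
      exact K.coe_nonneg
  set h : ℝ → ℂ := fun t => g (γ t) * deriv γ t with hh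
  set H : ℝ → ℂ := (Ioo a b).indicator h with hHdef
  have hHint : Integrable H := by
    rw [hHdef, integrable_indicator_iff measurableSet_Ioo]
    have hsm : AEStronglyMeasurable h (volume.restrict (Ioo a b)) := by
      apply AEStronglyMeasurable.mul
      · exact (hgγ.mono Ioo_subset_Icc_self).aestronglyMeasurable measurableSet_Ioo
      · exact (measurable_deriv γ).aestronglyMeasurable.restrict
    apply Integrable.mono' (integrableOn_const (C := M * (K : ℝ)) measure_Ioo_lt_top.ne) hsm
    filter_upwards [ae_restrict_mem measurableSet_Ioo] with t ht
    rw [hh, norm_mul]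
    exact mul_le_mul (hM t (Ioo_subset_Icc_self ht)) (hderivb t ht) (norm_nonneg _) hM0
  have hb : ∀ᵐ s : ℝ, s ≠ b := ae_iff.2 (by simp)
  have hFeq : ∀ y ∈ Icc a b, (∫ s in a..y, H s) = φ (γ y) - φ (γ a) := by
    intro y hy
    have heq1 : (∫ s in a..y, H s) = ∫ s in a..y, g (γ s) * deriv γ s := by
      apply intervalIntegral.integral_congr_ae
      filter_upwards [hb] with s hsb hs
      rw [uIoc_of_le hy.1] at hs
      have hmem : s ∈ Ioo a b := ⟨hs.1, lt_of_le_of_ne (le_trans hs.2 hy.2) hsb⟩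
      rw [hHdef, Set.indicator_of_mem hmem]
    rw [heq1]
    exact hd a y le_rfl hy.1 hy.2
  have key : ∀ᵐ x : ℝ, x ∈ Set.uIoc a b → f (φ (γ x)) * g (γ x) * deriv γ x
      = f ((φ ∘ γ) x) * deriv (φ ∘ γ) x := by
    filter_upwards [ae_hasDerivAt_intervalIntegral H hHint a, hb] with x hx hxb hmem
    rw [uIoc_of_le hab.le] at hmem
    have hxIoo : x ∈ Ioo a b := ⟨hmem.1, lt_of_le_of_ne hmem.2 hxb⟩
    have heq : (φ ∘ γ) =ᶠ[𝓝 x] fun y => φ (γ a) + ∫ s in a..y, H s := by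
      filter_upwards [Ioo_mem_nhds hxIoo.1 hxIoo.2] with y hy
      simp only [Function.comp_apply]
      rw [hFeq y (Ioo_subset_Icc_self hy)]
      ring
    have hder2 : HasDerivAt (φ ∘ γ) (H x) x :=
      (hx.const_add (φ (γ a))).congr_of_eventuallyEq heq
    rw [hder2.deriv, Function.comp_apply, hHdef, Set.indicator_of_mem hxIoo, hh, mul_assoc]
  exact intervalIntegral.integral_congr_ae key
end

section
/- Quotient rule for F-differentiation: Let X ⊆ ℂ be a compact set and let F be a collection of Lipschitz paths in X that is closed under subpaths. Let f, g, f₁, g₁ : ℂ → ℂ be continuous on X with f₁ an F-derivative of f, g₁ an F-derivative of g, and g(x) ≠ 0 for all x ∈ X. Then f/g (pointwise quotient) is F-differentiable with F-derivative (g·f₁ − f·g₁)/g²; that is, for every path γ (on [a,b]) in F, f(γ b)/g(γ b) − f(γ a)/g(γ a) = ∫ t in a..b, ((g(γ t)·f₁(γ t) − f(γ t)·g₁(γ t))/g(γ t)²) * deriv γ t. -/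
open Set intervalIntegral Filter

section AuxPrim

open Set MeasureTheory Filter

/-- `φ` is a primitive of `u` on `[a,b]`: FTC identity on all subintervals. -/
def IsPrimOn (a b : ℝ) (φ u : ℝ → ℂ) : Prop :=
  ∀ c d : ℝ, a ≤ c → c ≤ d → d ≤ b → φ d - φ c = ∫ t in c..d, u t

lemma IsPrimOn.mono' {a b c d : ℝ} {φ u : ℝ → ℂ} (h : IsPrimOn a b φ u)
    (h1 : a ≤ c) (h2 : d ≤ b) : IsPrimOn c d φ u :=
  fun c' d' g1 g2 g3 => h c' d' (h1.trans g1) g2 (g3.trans h2)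

lemma prim_mul_core {a b : ℝ} {φ ψ u v : ℝ → ℂ} (hab : a ≤ b)
    (hφc : ContinuousOn φ (Icc a b)) (hψc : ContinuousOn ψ (Icc a b))
    (hu : IntervalIntegrable u volume a b) (hv : IntervalIntegrable v volume a b)
    (hφ : IsPrimOn a b φ u) (hψ : IsPrimOn a b ψ v) :
    φ b * ψ b - φ a * ψ a = ∫ t in a..b, (φ t * v t + ψ t * u t) := by
  have huIcc : uIcc a b = Icc a b := uIcc_of_le hab
  have husub : ∀ {c d : ℝ}, a ≤ c → c ≤ d → d ≤ b → IntervalIntegrable u volume c d := by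
    intro c d h1 h2 h3
    exact hu.mono_set (by rw [uIcc_of_le h2, huIcc]; exact Icc_subset_Icc h1 h3)
  have hvsub : ∀ {c d : ℝ}, a ≤ c → c ≤ d → d ≤ b → IntervalIntegrable v volume c d := by
    intro c d h1 h2 h3
    exact hv.mono_set (by rw [uIcc_of_le h2, huIcc]; exact Icc_subset_Icc h1 h3)
  have hWs : ∀ {c d : ℝ}, a ≤ c → c ≤ d → d ≤ b →
      IntervalIntegrable (fun t => φ t * v t + ψ t * u t) volume c d := by
    intro c d h1 h2 h3
    have hsub : Icc c d ⊆ Icc a b := Icc_subset_Icc h1 h3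
    exact ((hvsub h1 h2 h3).continuousOn_mul (by rw [uIcc_of_le h2]; exact hφc.mono hsub)).add
      ((husub h1 h2 h3).continuousOn_mul (by rw [uIcc_of_le h2]; exact hψc.mono hsub))
  have key : ∀ c d : ℝ, a ≤ c → c ≤ d → d ≤ b →
      φ d * ψ d - φ c * ψ c - (∫ t in c..d, (φ t * v t + ψ t * u t))
        = ∫ t in c..d, ((ψ c - ψ t) * u t + (φ d - φ t) * v t) := by
    intro c d h1 h2 h3
    have hucd := husub h1 h2 h3
    have hvcd := hvsub h1 h2 h3
    have i3 := hWs h1 h2 h3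
    have e1 : (∫ t in c..d, ((ψ c - ψ t) * u t + (φ d - φ t) * v t))
        = (∫ t in c..d, (ψ c * u t + φ d * v t)) - ∫ t in c..d, (φ t * v t + ψ t * u t) := by
      rw [← intervalIntegral.integral_sub ((hucd.const_mul _).add (hvcd.const_mul _)) i3]
      exact intervalIntegral.integral_congr fun t _ => by ring
    rw [e1, intervalIntegral.integral_add (hucd.const_mul _) (hvcd.const_mul _),
      intervalIntegral.integral_const_mul, intervalIntegral.integral_const_mul,
      ← hφ c d h1 h2 h3, ← hψ c d h1 h2 h3]
    ring
  set C : ℝ := ∫ t in a..b, (‖u t‖ + ‖v t‖) with hCdef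
  have hCnn : 0 ≤ C :=
    intervalIntegral.integral_nonneg hab fun t _ => by positivity
  set Xv : ℂ := φ b * ψ b - φ a * ψ a - ∫ t in a..b, (φ t * v t + ψ t * u t) with hXdef
  have main : ∀ ε : ℝ, 0 < ε → ‖Xv‖ ≤ ε * C := by
    intro ε hε
    obtain ⟨δ₁, hδ₁, H1⟩ := Metric.uniformContinuousOn_iff.mp
      (isCompact_Icc.uniformContinuousOn_of_continuous hφc) ε hε
    obtain ⟨δ₂, hδ₂, H2⟩ := Metric.uniformContinuousOn_iff.mp
      (isCompact_Icc.uniformContinuousOn_of_continuous hψc) ε hε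
    set δ : ℝ := min δ₁ δ₂ with hδdef
    have hδ : 0 < δ := lt_min hδ₁ hδ₂
    obtain ⟨n, hn⟩ := exists_nat_gt (max ((b - a) / δ) 1)
    have hn1 : (1:ℝ) ≤ n := le_of_lt (lt_of_le_of_lt (le_max_right _ _) hn)
    have hnpos : (0:ℝ) < n := lt_of_lt_of_le one_pos hn1
    set h : ℝ := (b - a) / n with hhdef
    have hh0 : 0 ≤ h := div_nonneg (by linarith) hnpos.le
    have hhδ : h < δ := by
      have h2 : (b - a)/δ < n := lt_of_le_of_lt (le_max_left _ _) hn
      have h3 : b - a < n * δ := (div_lt_iff₀ hδ).mp h2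
      rw [hhdef, div_lt_iff₀ hnpos]
      linarith [h3, mul_comm (n:ℝ) δ]
    set x : ℕ → ℝ := fun i => a + i * h with hxdef
    have hx0 : x 0 = a := by simp [hxdef]
    have hnh : (n:ℝ) * h = b - a := by rw [hhdef]; field_simp
    have hxn : x n = b := by simp only [hxdef]; linarith
    have hxmono : ∀ i : ℕ, x i ≤ x (i+1) := by
      intro i; simp only [hxdef]; push_cast; nlinarith
    have hxmem : ∀ i : ℕ, i ≤ n → x i ∈ Icc a b := by
      intro i hi
      have hcast : (i:ℝ) ≤ n := Nat.cast_le.mpr hi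
      constructor
      · simp only [hxdef]; nlinarith [(Nat.cast_nonneg i : (0:ℝ) ≤ i)]
      · simp only [hxdef]; nlinarith [(Nat.cast_nonneg i : (0:ℝ) ≤ i)]
    have hxdiff : ∀ i : ℕ, x (i+1) - x i = h := by
      intro i; simp only [hxdef]; push_cast; ring
    set T : ℝ → ℂ := fun t => φ t * ψ t - ∫ s in a..t, (φ s * v s + ψ s * u s) with hTdef
    have tele : ∑ i ∈ Finset.range n, (T (x (i+1)) - T (x i)) = Xv := by
      rw [Finset.sum_range_sub (fun i => T (x i))]
      simp only [hx0, hxn, hTdef, hXdef]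
      rw [intervalIntegral.integral_same]
      ring
    have term_bound : ∀ i ∈ Finset.range n,
        ‖T (x (i+1)) - T (x i)‖ ≤ ε * ∫ t in x i..x (i+1), (‖u t‖ + ‖v t‖) := by
      intro i hi
      have hin : i + 1 ≤ n := Finset.mem_range.mp hi
      have hc := hxmem i (Nat.le_of_succ_le hin)
      have hd := hxmem (i+1) hin
      have hcd : x i ≤ x (i+1) := hxmono i
      have hdc : x (i+1) - x i = h := hxdiff i
      have hW_ad := hWs le_rfl hd.1 hd.2
      have hW_ac := hWs le_rfl hc.1 hc.2
      have hTd : T (x (i+1)) - T (x i) = (φ (x (i+1)) * ψ (x (i+1)) - φ (x i) * ψ (x i))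
          - ∫ t in x i..x (i+1), (φ t * v t + ψ t * u t) := by
        have e := intervalIntegral.integral_interval_sub_left hW_ad hW_ac
        simp only [hTdef]
        rw [← e]; ring
      have hucd := husub hc.1 hcd hd.2
      have hvcd := hvsub hc.1 hcd hd.2
      have hsub : Icc (x i) (x (i+1)) ⊆ Icc a b := Icc_subset_Icc hc.1 hd.2
      have hφcd : ContinuousOn φ (uIcc (x i) (x (i+1))) := by
        rw [uIcc_of_le hcd]; exact hφc.mono hsub
      have hψcd : ContinuousOn ψ (uIcc (x i) (x (i+1))) := by
        rw [uIcc_of_le hcd]; exact hψc.mono hsub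
      have i1 : IntervalIntegrable (fun t => (ψ (x i) - ψ t) * u t) volume (x i) (x (i+1)) :=
        hucd.continuousOn_mul (continuousOn_const.sub hψcd)
      have i2 : IntervalIntegrable (fun t => (φ (x (i+1)) - φ t) * v t) volume (x i) (x (i+1)) :=
        hvcd.continuousOn_mul (continuousOn_const.sub hφcd)
      have hle : ∀ t ∈ Icc (x i) (x (i+1)),
          ‖(ψ (x i) - ψ t) * u t + (φ (x (i+1)) - φ t) * v t‖ ≤ ε * ‖u t‖ + ε * ‖v t‖ := by
        intro t ht
        have htab : t ∈ Icc a b := hsub ht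
        have hdist1 : dist (x i) t < δ := by
          rw [Real.dist_eq, abs_sub_comm, abs_of_nonneg (by linarith [ht.1])]
          have h2 : t ≤ x (i+1) := ht.2
          calc t - x i ≤ h := by linarith
            _ < δ := hhδ
        have hdist2 : dist (x (i+1)) t < δ := by
          rw [Real.dist_eq, abs_of_nonneg (by linarith [ht.2])]
          have h2 : x i ≤ t := ht.1
          calc x (i+1) - t ≤ h := by linarith
            _ < δ := hhδ
        have hψb : ‖ψ (x i) - ψ t‖ ≤ ε := by
          have := H2 (x i) hc t htab (hdist1.trans_le (min_le_right _ _))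
          rw [dist_eq_norm] at this
          exact this.le
        have hφb : ‖φ (x (i+1)) - φ t‖ ≤ ε := by
          have := H1 (x (i+1)) hd t htab (hdist2.trans_le (min_le_left _ _))
          rw [dist_eq_norm] at this
          exact this.le
        calc ‖(ψ (x i) - ψ t) * u t + (φ (x (i+1)) - φ t) * v t‖
            ≤ ‖(ψ (x i) - ψ t) * u t‖ + ‖(φ (x (i+1)) - φ t) * v t‖ := norm_add_le _ _
          _ = ‖ψ (x i) - ψ t‖ * ‖u t‖ + ‖φ (x (i+1)) - φ t‖ * ‖v t‖ := by
              rw [norm_mul, norm_mul]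
          _ ≤ ε * ‖u t‖ + ε * ‖v t‖ := add_le_add
              (mul_le_mul_of_nonneg_right hψb (norm_nonneg _))
              (mul_le_mul_of_nonneg_right hφb (norm_nonneg _))
      have hnorm1 : ‖∫ t in x i..x (i+1), ((ψ (x i) - ψ t) * u t + (φ (x (i+1)) - φ t) * v t)‖
          ≤ ∫ t in x i..x (i+1), (ε * ‖u t‖ + ε * ‖v t‖) := by
        calc ‖∫ t in x i..x (i+1), ((ψ (x i) - ψ t) * u t + (φ (x (i+1)) - φ t) * v t)‖
            ≤ ∫ t in x i..x (i+1), ‖(ψ (x i) - ψ t) * u t + (φ (x (i+1)) - φ t) * v t‖ :=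
              intervalIntegral.norm_integral_le_integral_norm hcd
          _ ≤ _ := intervalIntegral.integral_mono_on hcd (i1.add i2).norm
              ((hucd.norm.const_mul ε).add (hvcd.norm.const_mul ε)) hle
      have e2 : (∫ t in x i..x (i+1), (ε * ‖u t‖ + ε * ‖v t‖))
          = ε * ∫ t in x i..x (i+1), (‖u t‖ + ‖v t‖) := by
        rw [← intervalIntegral.integral_const_mul]
        exact intervalIntegral.integral_congr fun t _ => by ring
      rw [hTd, key (x i) (x (i+1)) hc.1 hcd hd.2]
      rw [e2] at hnorm1
      exact hnorm1
    calc ‖Xv‖ = ‖∑ i ∈ Finset.range n, (T (x (i+1)) - T (x i))‖ := by rw [tele]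
      _ ≤ ∑ i ∈ Finset.range n, ‖T (x (i+1)) - T (x i)‖ := norm_sum_le _ _
      _ ≤ ∑ i ∈ Finset.range n, ε * ∫ t in x i..x (i+1), (‖u t‖ + ‖v t‖) :=
          Finset.sum_le_sum term_bound
      _ = ε * ∑ i ∈ Finset.range n, ∫ t in x i..x (i+1), (‖u t‖ + ‖v t‖) := by
          rw [Finset.mul_sum]
      _ = ε * C := by
          rw [intervalIntegral.sum_integral_adjacent_intervals
            (fun k hk => ((husub (hxmem k hk.le).1 (hxmono k) (hxmem (k+1) hk).2).norm.add
              (hvsub (hxmem k hk.le).1 (hxmono k) (hxmem (k+1) hk).2).norm)), hx0, hxn]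
  have hX0 : ‖Xv‖ ≤ 0 := by
    refine le_of_forall_pos_le_add fun ε hε => ?_
    have h1 := main (ε / (C + 1)) (by positivity)
    have h2 : ε / (C + 1) * C ≤ ε := by
      rw [div_mul_eq_mul_div, div_le_iff₀ (by positivity)]
      nlinarith
    linarith
  have hX : Xv = 0 := norm_le_zero_iff.mp hX0
  rw [hXdef] at hX
  linear_combination hX

lemma prim_mul {a b : ℝ} {φ ψ u v : ℝ → ℂ} (hab : a ≤ b)
    (hφc : ContinuousOn φ (Icc a b)) (hψc : ContinuousOn ψ (Icc a b))
    (hu : IntervalIntegrable u volume a b) (hv : IntervalIntegrable v volume a b)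
    (hφ : IsPrimOn a b φ u) (hψ : IsPrimOn a b ψ v) :
    IsPrimOn a b (fun t => φ t * ψ t) (fun t => φ t * v t + ψ t * u t) := by
  intro c d h1 h2 h3
  have hsub : Icc c d ⊆ Icc a b := Icc_subset_Icc h1 h3
  have hmono : uIcc c d ⊆ uIcc a b := by rw [uIcc_of_le h2, uIcc_of_le hab]; exact hsub
  exact prim_mul_core h2 (hφc.mono hsub) (hψc.mono hsub)
    (hu.mono_set hmono) (hv.mono_set hmono) (hφ.mono' h1 h3) (hψ.mono' h1 h3)

/-- Grönwall-type uniqueness: a continuous solution of `E t = ∫_a^t k·E` vanishes. -/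
lemma gronwall_zero {a b : ℝ} {E k : ℝ → ℂ} (hab : a ≤ b)
    (hE : ContinuousOn E (Icc a b)) (hk : IntervalIntegrable k volume a b)
    (hEa : E a = 0)
    (hprim : ∀ c d : ℝ, a ≤ c → c ≤ d → d ≤ b → E d - E c = ∫ t in c..d, k t * E t) :
    ∀ t ∈ Icc a b, E t = 0 := by
  set Z : Set ℝ := {t | t ∈ Icc a b ∧ ∀ s ∈ Icc a t, E s = 0} with hZdef
  have haZ : a ∈ Z := ⟨left_mem_Icc.mpr hab, fun s hs => by
    have hsa : s = a := le_antisymm hs.2 hs.1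
    rw [hsa]; exact hEa⟩
  have hZne : Z.Nonempty := ⟨a, haZ⟩
  have hZbdd : BddAbove Z := ⟨b, fun t ht => ht.1.2⟩
  set c := sSup Z with hcdef
  have hac : a ≤ c := le_csSup hZbdd haZ
  have hcb : c ≤ b := csSup_le hZne fun t ht => ht.1.2
  have hlt : ∀ s ∈ Ico a c, E s = 0 := by
    intro s hs
    obtain ⟨t, htZ, hst⟩ := exists_lt_of_lt_csSup hZne hs.2
    exact htZ.2 s ⟨hs.1, hst.le⟩
  have hEc : E c = 0 := by
    rcases eq_or_lt_of_le hac with h2 | h2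
    · rw [← h2]; exact hEa
    · have hten : Filter.Tendsto E (nhdsWithin c (Ico a c)) (nhds (E c)) :=
        (hE.continuousWithinAt ⟨hac, hcb⟩).mono_left
          (nhdsWithin_mono c (fun y hy => ⟨hy.1, hy.2.le.trans hcb⟩))
      haveI hne : (nhdsWithin c (Ico a c)).NeBot := by
        apply mem_closure_iff_nhdsWithin_neBot.mp
        rw [closure_Ico h2.ne]
        exact ⟨hac, le_rfl⟩
      have heq : E =ᶠ[nhdsWithin c (Ico a c)] fun _ => (0:ℂ) := by
        filter_upwards [self_mem_nhdsWithin] with t ht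
        exact hlt t ht
      have h0 : Filter.Tendsto E (nhdsWithin c (Ico a c)) (nhds (0:ℂ)) :=
        (Filter.tendsto_congr' heq).mpr tendsto_const_nhds
      exact tendsto_nhds_unique hten h0
  have hczero : ∀ s ∈ Icc a c, E s = 0 := by
    intro s hs
    rcases eq_or_lt_of_le hs.2 with h | h
    · rw [h]; exact hEc
    · exact hlt s ⟨hs.1, h⟩
  have hbc : b ≤ c := by
    by_contra hlt'
    push_neg at hlt'
    have hsub1 : uIcc c b ⊆ uIcc a b := by
      rw [uIcc_of_le hlt'.le, uIcc_of_le hab]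
      exact Icc_subset_Icc hac le_rfl
    have hIccint : IntegrableOn (fun t => ‖k t‖) (Icc c b) volume :=
      (intervalIntegrable_iff_integrableOn_Icc_of_le hlt'.le).mp (hk.norm.mono_set hsub1)
    have hNcont : ContinuousOn (fun t => ∫ s in c..t, ‖k s‖) (Icc c b) := by
      have := intervalIntegral.continuousOn_primitive_interval (a := c) (b := b)
        (f := fun s => ‖k s‖) (μ := volume) (by rw [uIcc_of_le hlt'.le]; exact hIccint)
      rwa [uIcc_of_le hlt'.le] at this
    obtain ⟨δ, hδpos, hδ⟩ := Metric.continuousWithinAt_iff.mp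
      (hNcont.continuousWithinAt (left_mem_Icc.mpr hlt'.le)) (1/2) (by norm_num)
    set d := min (c + δ/2) b with hddef
    have hcd : c < d := lt_min (by linarith) hlt'
    have hdb : d ≤ b := min_le_right _ _
    have hNd : ∀ t ∈ Icc c d, (∫ s in c..t, ‖k s‖) ≤ 1/2 := by
      intro t ht
      have h1 : t ∈ Icc c b := ⟨ht.1, ht.2.trans hdb⟩
      have h2 : dist t c < δ := by
        rw [Real.dist_eq, abs_of_nonneg (by linarith [ht.1])]
        have : t ≤ c + δ/2 := ht.2.trans (min_le_left _ _)
        linarith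
      have h3 := hδ h1 h2
      rw [Real.dist_eq, intervalIntegral.integral_same, sub_zero] at h3
      exact (le_abs_self _).trans h3.le
    have hEcd : ContinuousOn E (Icc c d) := hE.mono (Icc_subset_Icc hac hdb)
    obtain ⟨t₀, ht₀, hmax⟩ := isCompact_Icc.exists_isMaxOn (nonempty_Icc.mpr hcd.le) hEcd.norm
    have hEint : ∀ t ∈ Icc c d, E t = ∫ s in c..t, k s * E s := by
      intro t ht
      have h4 := hprim c t hac ht.1 (ht.2.trans hdb)
      rw [hEc, sub_zero] at h4
      exact h4
    have hkk : IntervalIntegrable k volume c t₀ := hk.mono_set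
      (by rw [uIcc_of_le ht₀.1, uIcc_of_le hab]; exact Icc_subset_Icc hac (ht₀.2.trans hdb))
    have hkE : IntervalIntegrable (fun s => k s * E s) volume c t₀ :=
      hkk.mul_continuousOn
        (by rw [uIcc_of_le ht₀.1]; exact hE.mono (Icc_subset_Icc hac (ht₀.2.trans hdb)))
    have hbound : ‖E t₀‖ ≤ (1/2) * ‖E t₀‖ := by
      calc ‖E t₀‖ = ‖∫ s in c..t₀, k s * E s‖ := by rw [← hEint t₀ ht₀]
        _ ≤ ∫ s in c..t₀, ‖k s * E s‖ := intervalIntegral.norm_integral_le_integral_norm ht₀.1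
        _ ≤ ∫ s in c..t₀, ‖k s‖ * ‖E t₀‖ := by
            refine intervalIntegral.integral_mono_on ht₀.1 hkE.norm (hkk.norm.mul_const _)
              fun s hs => ?_
            rw [norm_mul]
            exact mul_le_mul_of_nonneg_left (hmax ⟨hs.1, hs.2.trans ht₀.2⟩) (norm_nonneg _)
        _ = (∫ s in c..t₀, ‖k s‖) * ‖E t₀‖ := by rw [intervalIntegral.integral_mul_const]
        _ ≤ (1/2) * ‖E t₀‖ :=
            mul_le_mul_of_nonneg_right (hNd t₀ ht₀) (norm_nonneg _)
    have hmax0 : ‖E t₀‖ ≤ 0 := by linarith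
    have hall : ∀ s ∈ Icc c d, E s = 0 := fun s hs =>
      norm_le_zero_iff.mp ((hmax hs).trans hmax0)
    have hdZ : d ∈ Z := by
      refine ⟨⟨hac.trans hcd.le, hdb⟩, fun s hs => ?_⟩
      rcases le_or_gt s c with h | h
      · exact hczero s ⟨hs.1, h⟩
      · exact hall s ⟨h.le, hs.2⟩
    have : d ≤ c := le_csSup hZbdd hdZ
    linarith
  have hcb' : c = b := le_antisymm hcb hbc
  intro t ht
  exact hczero t ⟨ht.1, ht.2.trans hcb'.ge⟩

lemma prim_inv {a b : ℝ} {ψ v : ℝ → ℂ} (hab : a ≤ b)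
    (hψc : ContinuousOn ψ (Icc a b)) (hv : IntervalIntegrable v volume a b)
    (hψ : IsPrimOn a b ψ v) (hne : ∀ t ∈ Icc a b, ψ t ≠ 0) :
    IsPrimOn a b (fun t => (ψ t)⁻¹) (fun t => -(v t) / (ψ t) ^ 2) := by
  have huIcc : uIcc a b = Icc a b := uIcc_of_le hab
  have hfun : (fun t => -(v t) / (ψ t) ^ 2) = (fun t => v t * (-(((ψ t) ^ 2)⁻¹))) := by
    funext t; rw [div_eq_mul_inv]; ring
  rw [hfun]
  set w : ℝ → ℂ := fun t => v t * (-(((ψ t) ^ 2)⁻¹)) with hwdef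
  have hw : IntervalIntegrable w volume a b := by
    refine hv.mul_continuousOn ?_
    rw [huIcc]
    exact ((hψc.pow 2).inv₀ fun t ht => pow_ne_zero _ (hne t ht)).neg
  have hwsub : ∀ {c d : ℝ}, a ≤ c → c ≤ d → d ≤ b → IntervalIntegrable w volume c d := by
    intro c d h1 h2 h3
    exact hw.mono_set (by rw [uIcc_of_le h2, huIcc]; exact Icc_subset_Icc h1 h3)
  set S : ℝ → ℂ := fun t => (ψ a)⁻¹ + ∫ s in a..t, w s with hSdef
  have hSprim : IsPrimOn a b S w := by
    intro c d h1 h2 h3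
    have e := intervalIntegral.integral_interval_sub_left
      (hwsub le_rfl (h1.trans h2) h3) (hwsub le_rfl h1 (h2.trans h3))
    simp only [hSdef]
    rw [← e]; ring
  have hScont : ContinuousOn S (Icc a b) := by
    apply continuousOn_const.add
    have := intervalIntegral.continuousOn_primitive_interval (a := a) (b := b)
      (f := w) (μ := volume)
      (by rw [huIcc]; exact (intervalIntegrable_iff_integrableOn_Icc_of_le hab).mp hw)
    rwa [huIcc] at this
  have hprod := prim_mul hab hψc hScont hv hw hψ hSprim
  set E : ℝ → ℂ := fun t => ψ t * S t - 1 with hEdef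
  set k : ℝ → ℂ := fun t => v t * (ψ t)⁻¹ with hkdef
  have hkint : IntervalIntegrable k volume a b := by
    refine hv.mul_continuousOn ?_
    rw [huIcc]; exact hψc.inv₀ hne
  have hEcont : ContinuousOn E (Icc a b) := (hψc.mul hScont).sub continuousOn_const
  have hEa : E a = 0 := by
    simp only [hEdef, hSdef, intervalIntegral.integral_same, add_zero]
    rw [mul_inv_cancel₀ (hne a (left_mem_Icc.mpr hab))]
    ring
  have hEprim : ∀ c d : ℝ, a ≤ c → c ≤ d → d ≤ b → E d - E c = ∫ t in c..d, k t * E t := by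
    intro c d h1 h2 h3
    have h4 := hprod c d h1 h2 h3
    simp only [hEdef]
    rw [show ψ d * S d - 1 - (ψ c * S c - 1) = ψ d * S d - ψ c * S c by ring]
    simp only at h4
    rw [h4]
    apply intervalIntegral.integral_congr
    intro t ht
    rw [uIcc_of_le h2] at ht
    have hψt : ψ t ≠ 0 := hne t (Icc_subset_Icc h1 h3 ht)
    simp only [hkdef, hEdef, hwdef]
    field_simp
    ring
  have hEzero := gronwall_zero hab hEcont hkint hEa hEprim
  have hSinv : ∀ t ∈ Icc a b, S t = (ψ t)⁻¹ := by
    intro t ht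
    have h5 := hEzero t ht
    simp only [hEdef, sub_eq_zero] at h5
    exact (inv_eq_of_mul_eq_one_right h5).symm
  intro c d h1 h2 h3
  have h6 := hSprim c d h1 h2 h3
  simp only
  rw [← hSinv d ⟨h1.trans h2, h3⟩, ← hSinv c ⟨h1, h2.trans h3⟩]
  exact h6

lemma lip_mul_deriv_integrable {X : Set ℂ} (hX : IsCompact X) {h : ℂ → ℂ}
    (hh : ContinuousOn h X) {γ : ℝ → ℂ} {a b : ℝ} {K : NNReal}
    (hK : LipschitzOnWith K γ (Icc a b)) (himg : γ '' Icc a b ⊆ X) (hab : a ≤ b) :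
    IntervalIntegrable (fun t => h (γ t) * deriv γ t) volume a b := by
  have hmaps : MapsTo γ (Icc a b) X := fun t ht => himg ⟨t, ht, rfl⟩
  obtain ⟨C, hC⟩ := hX.exists_bound_of_continuousOn hh
  have hC0 : ∀ x ∈ X, ‖h x‖ ≤ max C 0 := fun x hx => (hC x hx).trans (le_max_left _ _)
  rw [intervalIntegrable_iff_integrableOn_Ioo_of_le hab]
  have hγc : ContinuousOn γ (Icc a b) := hK.continuousOn
  have hmeas : AEStronglyMeasurable (fun t => h (γ t) * deriv γ t)
      (volume.restrict (Ioo a b)) := by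
    apply AEStronglyMeasurable.mul
    · exact (((hh.comp hγc hmaps).mono Ioo_subset_Icc_self).aestronglyMeasurable
        measurableSet_Ioo)
    · exact (measurable_deriv γ).aestronglyMeasurable.restrict
  refine Integrable.mono' (g := fun _ => (max C 0) * K)
    (integrableOn_const measure_Ioo_lt_top.ne) hmeas ?_
  rw [ae_restrict_iff' measurableSet_Ioo]
  refine ae_of_all _ fun t ht => ?_
  have htd : ‖deriv γ t‖ ≤ K := by
    have h1 : ‖fderiv ℝ γ t‖ ≤ K := norm_fderiv_le_of_lipschitzOn ℝ
      (Icc_mem_nhds ht.1 ht.2) hK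
    calc ‖deriv γ t‖ = ‖(fderiv ℝ γ t) 1‖ := by rw [fderiv_apply_one_eq_deriv]
      _ ≤ ‖fderiv ℝ γ t‖ * ‖(1:ℝ)‖ := (fderiv ℝ γ t).le_opNorm 1
      _ ≤ K := by simpa using h1
  rw [norm_mul]
  exact mul_le_mul (hC0 _ (hmaps (Ioo_subset_Icc_self ht))) htd (norm_nonneg _)
    (le_max_right C 0)

end AuxPrim

/-- Quotient rule for `F`-differentiation. -/
theorem fDeriv_quotient_rule (X : Set ℂ) (hX : IsCompact X)
    (F : Set PathData) (hFX : ∀ p ∈ F, IsLipPathIn X p)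
    (hFsub : ClosedUnderSubpaths F)
    (f g f₁ g₁ : ℂ → ℂ)
    (hf : ContinuousOn f X) (hg : ContinuousOn g X)
    (hf₁ : ContinuousOn f₁ X) (hg₁ : ContinuousOn g₁ X)
    (hfd : IsFDeriv F f f₁) (hgd : IsFDeriv F g g₁)
    (hne : ∀ x ∈ X, g x ≠ 0) :
    IsFDeriv F (fun x => f x / g x)
      (fun x => (g x * f₁ x - f x * g₁ x) / (g x) ^ 2) := by
  intro p hp
  obtain ⟨γ, a, b⟩ := p
  obtain ⟨hab, ⟨K, hK⟩, himg⟩ := hFX _ hp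
  simp only at hab hK himg ⊢
  have hable : a ≤ b := hab.le
  have hmaps : Set.MapsTo γ (Set.Icc a b) X := fun t ht => himg ⟨t, ht, rfl⟩
  have hγc : ContinuousOn γ (Set.Icc a b) := hK.continuousOn
  set φ : ℝ → ℂ := fun t => f (γ t) with hφdef
  set ψ : ℝ → ℂ := fun t => g (γ t) with hψdef
  set u : ℝ → ℂ := fun t => f₁ (γ t) * deriv γ t with hudef
  set v : ℝ → ℂ := fun t => g₁ (γ t) * deriv γ t with hvdef
  have hφc : ContinuousOn φ (Set.Icc a b) := hf.comp hγc hmaps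
  have hψc : ContinuousOn ψ (Set.Icc a b) := hg.comp hγc hmaps
  have hu : IntervalIntegrable u MeasureTheory.volume a b :=
    lip_mul_deriv_integrable hX hf₁ hK himg hable
  have hv : IntervalIntegrable v MeasureTheory.volume a b :=
    lip_mul_deriv_integrable hX hg₁ hK himg hable
  have hφp : IsPrimOn a b φ u := by
    intro c d h1 h2 h3
    rcases eq_or_lt_of_le h2 with h | h
    · subst h; simp [intervalIntegral.integral_same]
    · exact (hfd (γ, c, d) (hFsub (γ, a, b) hp c d h1 h h3)).symm
  have hψp : IsPrimOn a b ψ v := by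
    intro c d h1 h2 h3
    rcases eq_or_lt_of_le h2 with h | h
    · subst h; simp [intervalIntegral.integral_same]
    · exact (hgd (γ, c, d) (hFsub (γ, a, b) hp c d h1 h h3)).symm
  have hneψ : ∀ t ∈ Set.Icc a b, ψ t ≠ 0 := fun t ht => hne _ (hmaps ht)
  have hinv := prim_inv hable hψc hv hψp hneψ
  have hinvc : ContinuousOn (fun t => (ψ t)⁻¹) (Set.Icc a b) := hψc.inv₀ hneψ
  have hwint : IntervalIntegrable (fun t => -(v t) / (ψ t) ^ 2) MeasureTheory.volume a b := by
    have h7 : IntervalIntegrable (fun t => v t * (-(((ψ t) ^ 2)⁻¹))) MeasureTheory.volume a b := by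
      refine hv.mul_continuousOn ?_
      rw [Set.uIcc_of_le hable]
      exact ((hψc.pow 2).inv₀ fun t ht => pow_ne_zero _ (hneψ t ht)).neg
    have hfun : (fun t => -(v t) / (ψ t) ^ 2) = (fun t => v t * (-(((ψ t) ^ 2)⁻¹))) := by
      funext t; rw [div_eq_mul_inv]; ring
    rw [hfun]; exact h7
  have hq := prim_mul hable hφc hinvc hu hwint hφp hinv
  have hq2 := hq a b le_rfl hable le_rfl
  simp only at hq2
  have hgoal : f (γ b) / g (γ b) - f (γ a) / g (γ a) = φ b * (ψ b)⁻¹ - φ a * (ψ a)⁻¹ := by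
    simp only [hφdef, hψdef, div_eq_mul_inv]
  rw [hgoal, hq2]
  apply intervalIntegral.integral_congr
  intro t ht
  rw [Set.uIcc_of_le hable] at ht
  have h0 : g (γ t) ≠ 0 := hneψ t ht
  simp only [hφdef, hψdef, hudef, hvdef]
  field_simp
  ring
end

section
/- Let X ⊆ ℂ be a compact set and let F be an effective collection of Lipschitz paths in X. Let f, f₁, g, g₁ : ℂ → ℂ be continuous on X with f₁ an F-derivative of f, g₁ an F-derivative of g, and g(X) ⊆ X. Suppose that the pair (f, f₁) is a uniform limit of differentiable pairs: for every ε > 0 there exist h, h' : ℂ → ℂ with h' continuous on X and h having complex derivative h'(x) within X at every x ∈ X (HasDerivWithinAt h (h' x) X x), such that sup_{x∈X} |f(x) − h(x)| + sup_{x∈X} |f₁(x) − h'(x)| < ε (this holds in particular whenever D(X) is dense in D¹_F(X) for the norm ‖u‖ = sup_X|u| + sup_X|u^[1]|). Then (f₁ ∘ g)·g₁ is an F-derivative of f ∘ g. -/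
open Set intervalIntegral Filter
open MeasureTheory Topology

lemma aux_ae_ne (c : ℝ) : ∀ᵐ t : ℝ, t ≠ c := by
  refine MeasureTheory.ae_iff.mpr ?_
  simpa using measure_singleton c

lemma aux_deriv_bound {γ : ℝ → ℂ} {K : NNReal} {a b : ℝ}
    (hK : LipschitzOnWith K γ (Set.Icc a b)) {t : ℝ} (ht : t ∈ Set.Ioo a b) :
    ‖deriv γ t‖ ≤ K := by
  by_cases hdiff : DifferentiableAt ℝ γ t
  · have h1 : Tendsto (slope γ t) (𝓝[≠] t) (𝓝 (deriv γ t)) :=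
      hasDerivAt_iff_tendsto_slope.mp hdiff.hasDerivAt
    refine le_of_tendsto h1.norm ?_
    have hmem : Set.Ioo a b ∈ 𝓝[≠] t :=
      mem_nhdsWithin_of_mem_nhds (Ioo_mem_nhds ht.1 ht.2)
    filter_upwards [hmem, self_mem_nhdsWithin] with y hy hyt
    have hyt' : y ≠ t := hyt
    have h2 : ‖γ y - γ t‖ ≤ K * |y - t| := by
      have := hK.dist_le_mul y (Set.Ioo_subset_Icc_self hy) t (Set.Ioo_subset_Icc_self ht)
      simpa [dist_eq_norm, Real.dist_eq] using this
    have h3 : ‖slope γ t y‖ = ‖γ y - γ t‖ / |y - t| := by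
      show ‖(y - t)⁻¹ • (γ y - γ t)‖ = _
      rw [norm_smul, norm_inv, Real.norm_eq_abs, div_eq_inv_mul]
    rw [h3, div_le_iff₀ (abs_pos.mpr (sub_ne_zero.mpr hyt'))]
    linarith [h2]
  · rw [deriv_zero_of_not_differentiableAt hdiff]
    simpa using K.2

lemma aux_intervalIntegrable {u : ℝ → ℂ} {a b : ℝ} (hab : a ≤ b)
    (hm : AEStronglyMeasurable u (volume.restrict (Set.Ioc a b))) {C : ℝ}
    (hC : ∀ᵐ t : ℝ, t ∈ Set.Ioc a b → ‖u t‖ ≤ C) :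
    IntervalIntegrable u volume a b := by
  rw [intervalIntegrable_iff, Set.uIoc_of_le hab]
  exact Integrable.mono' (integrableOn_const measure_Ioc_lt_top.ne) hm
    ((ae_restrict_iff' measurableSet_Ioc).mpr hC)

set_option maxHeartbeats 2000000 in
lemma core_chain {X : Set ℂ} {h h' : ℂ → ℂ}
    (hh' : ContinuousOn h' X)
    (hd : ∀ x ∈ X, HasDerivWithinAt h (h' x) X x)
    {φ G : ℝ → ℂ} {a b : ℝ} (hab : a < b)
    (hφi : IntegrableOn φ (Set.Icc a b))
    {Cφ : ℝ} (hφb : ∀ t ∈ Set.Ioo a b, ‖φ t‖ ≤ Cφ)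
    (hG : ∀ c ∈ Set.Icc a b, G c = G a + ∫ t in a..c, φ t)
    (hGX : ∀ t ∈ Set.Icc a b, G t ∈ X) :
    (∫ t in a..b, h' (G t) * φ t) = h (G b) - h (G a) := by
  have hCφ0 : 0 ≤ Cφ :=
    le_trans (norm_nonneg _) (hφb ((a+b)/2) ⟨by linarith, by linarith⟩)
  -- integrability on subintervals
  have hIφ : ∀ c ∈ Set.Icc a b, ∀ d ∈ Set.Icc a b, IntervalIntegrable φ volume c d := by
    intro c hc d hd
    exact (hφi.mono_set (Set.uIcc_subset_Icc hc hd)).intervalIntegrable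
  have haI : a ∈ Set.Icc a b := ⟨le_rfl, hab.le⟩
  have hbI : b ∈ Set.Icc a b := ⟨hab.le, le_rfl⟩
  -- increments of G are integrals of φ
  have hsub : ∀ c ∈ Set.Icc a b, ∀ d ∈ Set.Icc a b,
      G d - G c = ∫ t in c..d, φ t := by
    intro c hc d hd
    rw [hG c hc, hG d hd]
    have h1 := intervalIntegral.integral_interval_sub_left
      (hIφ a haI d hd) (hIφ a haI c hc)
    rw [← h1]; ring
  -- G is Lipschitz with constant Cφ
  have hGLip : ∀ c ∈ Set.Icc a b, ∀ d ∈ Set.Icc a b, c ≤ d →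
      ‖G d - G c‖ ≤ Cφ * (d - c) := by
    intro c hc d hd hcd
    rw [hsub c hc d hd]
    have h1 : ‖∫ t in c..d, φ t‖ ≤ Cφ * |d - c| := by
      apply intervalIntegral.norm_integral_le_of_norm_le_const_ae
      filter_upwards [aux_ae_ne b] with t htb hmem
      rw [Set.uIoc_of_le hcd] at hmem
      exact hφb t ⟨lt_of_le_of_lt hc.1 hmem.1,
        lt_of_le_of_ne (hmem.2.trans hd.2) htb⟩
    rwa [abs_of_nonneg (sub_nonneg.2 hcd)] at h1
  have hGlips : LipschitzOnWith (Real.toNNReal Cφ) G (Set.Icc a b) := by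
    apply LipschitzOnWith.of_dist_le_mul
    intro x hx y hy
    rcases le_total y x with hyx | hxy
    · rw [dist_eq_norm, Real.dist_eq, abs_of_nonneg (sub_nonneg.2 hyx),
        Real.coe_toNNReal _ hCφ0]
      exact hGLip y hy x hx hyx
    · rw [dist_eq_norm, norm_sub_rev, Real.dist_eq, abs_of_nonpos (sub_nonpos.2 hxy),
        Real.coe_toNNReal _ hCφ0, neg_sub]
      exact hGLip x hx y hy hxy
  have hGcont : ContinuousOn G (Set.Icc a b) := hGlips.continuousOn
  have hmapsG : Set.MapsTo G (Set.Icc a b) X := fun t ht => hGX t ht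
  have hhcont : ContinuousOn h X := fun x hx => (hd x hx).continuousWithinAt
  have hHcont : ContinuousOn (fun t => h (G t)) (Set.Icc a b) :=
    hhcont.comp hGcont hmapsG
  obtain ⟨M₀, hM₀⟩ := isCompact_Icc.exists_bound_of_continuousOn
    (hh'.comp hGcont hmapsG)
  set M := max M₀ 0 with hM
  have hM0 : 0 ≤ M := le_max_right _ _
  have hMb : ∀ t ∈ Set.Icc a b, ‖h' (G t)‖ ≤ M := fun t ht =>
    (hM₀ t ht).trans (le_max_left _ _)
  set L := M * Cφ with hL
  have hL0 : 0 ≤ L := mul_nonneg hM0 hCφ0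
  -- key differentiability estimate along the curve
  have key : ∀ t ∈ Set.Ico a b, ∀ ε > (0:ℝ), ∀ᶠ z in 𝓝[Set.Ioc t b] t,
      ‖h (G z) - h (G t) - h' (G t) * (G z - G t)‖ ≤ ε * ‖G z - G t‖ := by
    intro t ht ε hε
    have htI : t ∈ Set.Icc a b := ⟨ht.1, ht.2.le⟩
    have hGt : G t ∈ X := hGX t htI
    have hder := hd _ hGt
    rw [hasDerivWithinAt_iff_isLittleO] at hder
    have hev : ∀ᶠ y in 𝓝[X] (G t),
        ‖h y - h (G t) - (y - G t) • h' (G t)‖ ≤ ε * ‖y - G t‖ :=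
      (Asymptotics.isLittleO_iff.mp hder) hε
    have htend : Tendsto G (𝓝[Set.Ioc t b] t) (𝓝[X] (G t)) := by
      apply ContinuousWithinAt.tendsto_nhdsWithin
      · exact (hGcont t htI).mono (Set.Ioc_subset_Icc_self.trans
          (Set.Icc_subset_Icc ht.1 le_rfl))
      · intro z hz
        exact hGX z ⟨ht.1.trans hz.1.le, hz.2⟩
    filter_upwards [htend.eventually hev] with z hz
    simpa [smul_eq_mul, mul_comm] using hz
  -- H = h ∘ G is Lipschitz with constant L
  have hHLip : ∀ c ∈ Set.Icc a b, ∀ d ∈ Set.Icc a b, c ≤ d →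
      ‖h (G d) - h (G c)‖ ≤ L * (d - c) := by
    intro c hc d hd hcd
    rcases eq_or_lt_of_le hcd with rfl | hcd'
    · simp
    have main : ∀ ε > (0:ℝ), ‖h (G d) - h (G c)‖ ≤ (L + ε) * (d - c) := by
      intro ε hε
      have H := image_le_of_liminf_slope_right_le_deriv_boundary
        (f := fun z => ‖h (G z) - h (G c)‖) (a := c) (b := d)
        (B := fun z => (L + ε) * (z - c)) (B' := fun _ => L + ε)
        ?_ ?_ ?_ ?_ ?_
      · have := H (Set.right_mem_Icc.2 hcd)
        simpa using this
      · exact ((hHcont.mono (Set.Icc_subset_Icc hc.1 hd.2)).sub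
          continuousOn_const).norm
      · simp
      · exact (continuous_const.mul (continuous_id.sub continuous_const)).continuousOn
      · intro x hx
        have : HasDerivAt (fun z => (L + ε) * (z - c)) (L + ε) x := by
          simpa using ((hasDerivAt_id x).sub_const c).const_mul (L + ε)
        exact this.hasDerivWithinAt
      · intro x hx r hr
        have hx' : x ∈ Set.Ico a b := ⟨hc.1.trans hx.1, lt_of_lt_of_le hx.2 hd.2⟩
        have hxI : x ∈ Set.Icc a b := ⟨hx'.1, hx'.2.le⟩
        have hr' : L + ε < r := hr
        set ε' := (r - L) / (2 * (Cφ + 1)) with hε'def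
        have hLr : L < r := by linarith
        have hε' : 0 < ε' := div_pos (by linarith) (by linarith)
        have hfreq : ∀ᶠ z in 𝓝[Set.Ioc x b] x, slope (fun z => ‖h (G z) - h (G c)‖) x z < r := by
          filter_upwards [key x hx' ε' hε', eventually_mem_nhdsWithin] with z hk hz
          have hzI : z ∈ Set.Icc a b := ⟨hx'.1.trans hz.1.le, hz.2⟩
          have hGzx : ‖G z - G x‖ ≤ Cφ * (z - x) := hGLip x hxI z hzI hz.1.le
          have hMx : ‖h' (G x)‖ ≤ M := hMb x hxI
          have h1 : ‖h (G z) - h (G x)‖ ≤ (M + ε') * (Cφ * (z - x)) := by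
            have h2 : ‖h (G z) - h (G x)‖
                ≤ ‖h' (G x) * (G z - G x)‖ + ε' * ‖G z - G x‖ := by
              have e : h (G z) - h (G x)
                  = (h (G z) - h (G x) - h' (G x) * (G z - G x))
                    + h' (G x) * (G z - G x) := by ring
              rw [e]
              exact (norm_add_le _ _).trans (by linarith [hk])
            have h3 : ‖h' (G x) * (G z - G x)‖ ≤ M * (Cφ * (z - x)) := by
              rw [norm_mul]
              exact mul_le_mul hMx hGzx (norm_nonneg _) hM0
            have h4 : ε' * ‖G z - G x‖ ≤ ε' * (Cφ * (z - x)) :=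
              mul_le_mul_of_nonneg_left hGzx hε'.le
            nlinarith [h2, h3, h4]
          have hzx : 0 < z - x := sub_pos.2 hz.1
          have h5 : slope (fun z => ‖h (G z) - h (G c)‖) x z
              = (‖h (G z) - h (G c)‖ - ‖h (G x) - h (G c)‖) / (z - x) := by
            rw [slope_def_field]
          rw [h5, div_lt_iff₀ hzx]
          have h6 : ‖h (G z) - h (G c)‖ - ‖h (G x) - h (G c)‖ ≤ ‖h (G z) - h (G x)‖ := by
            have := norm_sub_norm_le (h (G z) - h (G c)) (h (G x) - h (G c))
            simpa using this
          have h7 : ε' * Cφ < r - L := by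
            rw [hε'def]
            rw [div_mul_eq_mul_div, div_lt_iff₀ (by linarith)]
            nlinarith
          nlinarith [h6, h1, hzx]
        have hne : (𝓝[Set.Ioc x b] x).NeBot := by
          apply mem_closure_iff_nhdsWithin_neBot.mp
          rw [closure_Ioc (show x ≠ b by exact ne_of_lt (lt_of_lt_of_le hx.2 hd.2))]
          exact ⟨le_rfl, (lt_of_lt_of_le hx.2 hd.2).le⟩
        exact (hfreq.frequently).filter_mono
          (nhdsWithin_mono x Set.Ioc_subset_Ioi_self)
    apply le_of_forall_pos_le_add
    intro δ hδ
    have h1 := main (δ / (d - c)) (div_pos hδ (by linarith))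
    have hdc : d - c ≠ 0 := ne_of_gt (by linarith)
    have h2 : (L + δ / (d - c)) * (d - c) = L * (d - c) + δ := by
      field_simp
    linarith [h1, h2.ge, h2.le]
  -- the integrand ψ
  have hψb : ∀ᵐ t : ℝ, t ∈ Set.Ioc a b → ‖h' (G t) * φ t‖ ≤ L := by
    filter_upwards [aux_ae_ne b] with t htb hmem
    have htoo : t ∈ Set.Ioo a b := ⟨hmem.1, lt_of_le_of_ne hmem.2 htb⟩
    rw [norm_mul]
    exact mul_le_mul (hMb t ⟨htoo.1.le, htoo.2.le⟩) (hφb t htoo)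
      (norm_nonneg _) hM0
  have hψm : AEStronglyMeasurable (fun t => h' (G t) * φ t)
      (volume.restrict (Set.Ioc a b)) := by
    refine AEStronglyMeasurable.mul ?_ ?_
    · exact ((hh'.comp hGcont hmapsG).mono Set.Ioc_subset_Icc_self).aestronglyMeasurable
        measurableSet_Ioc
    · exact hφi.aestronglyMeasurable.mono_measure
        (Measure.restrict_mono Set.Ioc_subset_Icc_self le_rfl)
  have hψi : IntervalIntegrable (fun t => h' (G t) * φ t) volume a b :=
    aux_intervalIntegrable hab.le hψm hψb
  -- the Steklov average function
  set Φ : ℝ → ℂ := fun δ => (δ:ℝ)⁻¹ • ∫ t in a..(b - δ), (h (G (t + δ)) - h (G t))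
    with hΦdef
  have hIccInt : ∀ u v : ℝ, a ≤ u → v ≤ b → u ≤ v →
      IntervalIntegrable (fun t => h (G t)) volume u v := fun u v hu hv huv =>
    (hHcont.mono (Set.Icc_subset_Icc hu hv)).intervalIntegrable_of_Icc huv
  -- Limit A : Φ tends to h (G b) - h (G a)
  have hTA : ∀ δ ∈ Set.Ioo (0:ℝ) ((b - a)/2), ‖Φ δ - (h (G b) - h (G a))‖ ≤ 2 * L * δ := by
    intro δ hδ
    obtain ⟨hδ0, hδ2⟩ := hδ
    have h1 : a ≤ a + δ := by linarith
    have h2 : a + δ ≤ b - δ := by linarith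
    have h3 : b - δ ≤ b := by linarith
    have iint1 : IntervalIntegrable (fun t => h (G (t + δ))) volume a (b - δ) := by
      refine ContinuousOn.intervalIntegrable_of_Icc (by linarith) ?_
      exact hHcont.comp ((continuous_id.add continuous_const).continuousOn)
        (fun t ht => ⟨by linarith [ht.1], by linarith [ht.2]⟩)
    have eA : ∫ t in a..(b - δ), h (G (t + δ)) = ∫ t in (a + δ)..b, h (G t) := by
      have := intervalIntegral.integral_comp_add_right (a := a) (b := b - δ)
        (fun t => h (G t)) δ
      simpa [sub_add_cancel] using this
    have esub : ∫ t in a..(b - δ), (h (G (t + δ)) - h (G t))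
        = (∫ t in (a + δ)..b, h (G t)) - ∫ t in a..(b - δ), h (G t) := by
      rw [intervalIntegral.integral_sub iint1 (hIccInt a (b - δ) le_rfl h3 (by linarith)), eA]
    have eadj1 : (∫ t in (a + δ)..(b - δ), h (G t)) + (∫ t in (b - δ)..b, h (G t))
        = ∫ t in (a + δ)..b, h (G t) :=
      intervalIntegral.integral_add_adjacent_intervals
        (hIccInt _ _ h1 h3 h2) (hIccInt _ _ (by linarith) le_rfl h3)
    have eadj2 : (∫ t in a..(a + δ), h (G t)) + (∫ t in (a + δ)..(b - δ), h (G t))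
        = ∫ t in a..(b - δ), h (G t) :=
      intervalIntegral.integral_add_adjacent_intervals
        (hIccInt _ _ le_rfl (by linarith) h1) (hIccInt _ _ h1 h3 h2)
    have ecmb : (∫ t in (a + δ)..b, h (G t)) - (∫ t in a..(b - δ), h (G t))
        = (∫ t in (b - δ)..b, h (G t)) - (∫ t in a..(a + δ), h (G t)) := by
      linear_combination eadj2 - eadj1
    have c1 : ∫ t in (b - δ)..b, (h (G t) - h (G b))
        = (∫ t in (b - δ)..b, h (G t)) - δ • h (G b) := by
      rw [intervalIntegral.integral_sub (hIccInt _ _ (by linarith) le_rfl h3)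
        intervalIntegrable_const, intervalIntegral.integral_const]
      rw [(by ring : b - (b - δ) = δ)]
    have c2 : ∫ t in a..(a + δ), (h (G t) - h (G a))
        = (∫ t in a..(a + δ), h (G t)) - δ • h (G a) := by
      rw [intervalIntegral.integral_sub (hIccInt _ _ le_rfl (by linarith) h1)
        intervalIntegrable_const, intervalIntegral.integral_const]
      rw [(by ring : a + δ - a = δ)]
    have n1 : ‖∫ t in (b - δ)..b, (h (G t) - h (G b))‖ ≤ (L * δ) * δ := by
      have hb1 : ∀ t ∈ Set.uIoc (b - δ) b, ‖h (G t) - h (G b)‖ ≤ L * δ := by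
        intro t htI
        rw [Set.uIoc_of_le h3] at htI
        have htIcc : t ∈ Set.Icc a b := ⟨by linarith [htI.1], htI.2⟩
        have := hHLip t htIcc b hbI htI.2
        rw [norm_sub_rev]
        refine this.trans ?_
        have : b - t ≤ δ := by linarith [htI.1]
        nlinarith
      have := intervalIntegral.norm_integral_le_of_norm_le_const hb1
      have habs : |b - (b - δ)| = δ := by rw [abs_of_nonneg (by linarith)]; ring
      rw [habs] at this
      linarith
    have n2 : ‖∫ t in a..(a + δ), (h (G t) - h (G a))‖ ≤ (L * δ) * δ := by
      have hb1 : ∀ t ∈ Set.uIoc a (a + δ), ‖h (G t) - h (G a)‖ ≤ L * δ := by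
        intro t htI
        rw [Set.uIoc_of_le h1] at htI
        have htIcc : t ∈ Set.Icc a b := ⟨htI.1.le, by linarith [htI.2]⟩
        have := hHLip a haI t htIcc htI.1.le
        refine this.trans ?_
        have : t - a ≤ δ := by linarith [htI.2]
        nlinarith
      have := intervalIntegral.norm_integral_le_of_norm_le_const hb1
      have habs : |a + δ - a| = δ := by rw [show a + δ - a = δ by ring, abs_of_nonneg hδ0.le]
      rw [habs] at this
      linarith
    have hδne : (δ:ℝ) ≠ 0 := ne_of_gt hδ0
    have ekey : Φ δ - (h (G b) - h (G a))
        = (δ:ℝ)⁻¹ • ((∫ t in (b - δ)..b, (h (G t) - h (G b)))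
          - (∫ t in a..(a + δ), (h (G t) - h (G a)))) := by
      have hδc : (δ:ℂ) ≠ 0 := Complex.ofReal_ne_zero.mpr hδne
      simp only [hΦdef]
      rw [esub, ecmb, c1, c2]
      simp only [Complex.real_smul]
      field_simp
      push_cast
      linear_combination (h (G b) - h (G a)) * (mul_inv_cancel₀ hδc)
    rw [ekey, norm_smul, norm_inv, Real.norm_eq_abs, abs_of_pos hδ0]
    have n3 : ‖(∫ t in (b - δ)..b, (h (G t) - h (G b)))
        - (∫ t in a..(a + δ), (h (G t) - h (G a)))‖ ≤ (L * δ) * δ + (L * δ) * δ :=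
      (norm_sub_le _ _).trans (add_le_add n1 n2)
    have n4 : δ⁻¹ * ‖(∫ t in (b - δ)..b, (h (G t) - h (G b)))
        - (∫ t in a..(a + δ), (h (G t) - h (G a)))‖ ≤ δ⁻¹ * ((L * δ) * δ + (L * δ) * δ) :=
      mul_le_mul_of_nonneg_left n3 (by positivity)
    have n5 : δ⁻¹ * ((L * δ) * δ + (L * δ) * δ) = 2 * L * δ := by
      field_simp
      ring
    linarith
  have TA : Tendsto Φ (𝓝[>] (0:ℝ)) (𝓝 (h (G b) - h (G a))) := by
    rw [← tendsto_sub_nhds_zero_iff]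
    have hbd : ∀ᶠ δ in 𝓝[>] (0:ℝ), ‖Φ δ - (h (G b) - h (G a))‖ ≤ 2 * L * δ := by
      filter_upwards [Ioo_mem_nhdsGT_of_mem
        (Set.mem_Ico.mpr ⟨le_rfl, by linarith⟩ : (0:ℝ) ∈ Set.Ico 0 ((b - a)/2))] with δ hδ
      exact hTA δ hδ
    have htz : Tendsto (fun δ : ℝ => 2 * L * δ) (𝓝[>] (0:ℝ)) (𝓝 0) := by
      have h0 : Tendsto (fun δ : ℝ => 2 * L * δ) (𝓝 0) (𝓝 (2 * L * 0)) :=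
        tendsto_id.const_mul _
      simpa using h0.mono_left nhdsWithin_le_nhds
    exact squeeze_zero_norm' hbd htz
  -- Limit B : Φ tends to the integral of ψ
  set F : ℝ → ℝ → ℂ := fun δ => Set.indicator (Set.Ioc a (b - δ))
    (fun t => (h (G (t + δ)) - h (G t)) / (δ:ℂ)) with hFdef
  have hΦeq : ∀ᶠ δ in 𝓝[>] (0:ℝ), (∫ x, F δ x) = Φ δ := by
    filter_upwards [Ioo_mem_nhdsGT_of_mem
      (Set.mem_Ico.mpr ⟨le_rfl, by linarith⟩ : (0:ℝ) ∈ Set.Ico 0 (b - a))] with δ hδ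
    simp only [hFdef]
    rw [MeasureTheory.integral_indicator measurableSet_Ioc,
      ← intervalIntegral.integral_of_le (by linarith [hδ.2] : a ≤ b - δ)]
    simp only [hΦdef]
    rw [← intervalIntegral.integral_smul]
    congr 1
    ext t
    rw [Complex.real_smul]
    rw [div_eq_inv_mul]
    push_cast
    ring
  have hφ'i : Integrable (Set.indicator (Set.Icc a b) φ) volume :=
    (integrable_indicator_iff measurableSet_Icc).mpr hφi
  have hleb := IsUnifLocDoublingMeasure.ae_tendsto_average_norm_sub
    (μ := (volume : Measure ℝ)) hφ'i.locallyIntegrable 1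
  have TB : Tendsto Φ (𝓝[>] (0:ℝ)) (𝓝 (∫ t in a..b, h' (G t) * φ t)) := by
    have hfeq : (∫ x, Set.indicator (Set.Ioc a b) (fun t => h' (G t) * φ t) x)
        = ∫ t in a..b, h' (G t) * φ t := by
      rw [MeasureTheory.integral_indicator measurableSet_Ioc,
        ← intervalIntegral.integral_of_le hab.le]
    have hdct : Tendsto (fun δ => ∫ x, F δ x) (𝓝[>] (0:ℝ))
        (𝓝 (∫ x, Set.indicator (Set.Ioc a b) (fun t => h' (G t) * φ t) x)) := by
      apply MeasureTheory.tendsto_integral_filter_of_dominated_convergence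
        (bound := Set.indicator (Set.Ioc a b) (fun _ => L))
      · -- measurability
        filter_upwards [Ioo_mem_nhdsGT_of_mem
          (Set.mem_Ico.mpr ⟨le_rfl, by linarith⟩ : (0:ℝ) ∈ Set.Ico 0 (b - a))] with δ hδ
        simp only [hFdef]
        rw [aestronglyMeasurable_indicator_iff measurableSet_Ioc]
        have hcont : ContinuousOn (fun t => (h (G (t + δ)) - h (G t)) / (δ:ℂ))
            (Set.Icc a (b - δ)) := by
          refine ContinuousOn.div_const ?_ _
          refine ContinuousOn.sub ?_ (hHcont.mono (Set.Icc_subset_Icc le_rfl (by linarith [hδ.1])))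
          exact hHcont.comp ((continuous_id.add continuous_const).continuousOn)
            (fun t ht => ⟨by linarith [ht.1, hδ.1], by linarith [ht.2]⟩)
        exact (hcont.mono Set.Ioc_subset_Icc_self).aestronglyMeasurable measurableSet_Ioc
      · -- bound
        filter_upwards [Ioo_mem_nhdsGT_of_mem
          (Set.mem_Ico.mpr ⟨le_rfl, by linarith⟩ : (0:ℝ) ∈ Set.Ico 0 (b - a))] with δ hδ
        apply Eventually.of_forall
        intro t
        by_cases ht : t ∈ Set.Ioc a (b - δ)
        · simp only [hFdef]
          rw [Set.indicator_of_mem ht]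
          have htb : t ∈ Set.Ioc a b := ⟨ht.1, by linarith [ht.2, hδ.1]⟩
          rw [Set.indicator_of_mem htb]
          have m1 : t ∈ Set.Icc a b := ⟨ht.1.le, by linarith [ht.2, hδ.1]⟩
          have m2 : t + δ ∈ Set.Icc a b := ⟨by linarith [ht.1, hδ.1], by linarith [ht.2]⟩
          have hlp := hHLip t m1 (t + δ) m2 (by linarith [hδ.1])
          rw [norm_div, Complex.norm_real, Real.norm_eq_abs, abs_of_pos hδ.1,
            div_le_iff₀ hδ.1]
          have : L * (t + δ - t) = L * δ := by ring
          linarith [hlp, this.le, this.ge]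
        · simp only [hFdef]
          rw [Set.indicator_of_notMem ht]
          simp only [norm_zero]
          exact Set.indicator_nonneg (fun _ _ => hL0) t
      · exact (integrable_indicator_iff measurableSet_Ioc).mpr
          (integrableOn_const measure_Ioc_lt_top.ne)
      · -- pointwise limit
        filter_upwards [hleb, aux_ae_ne a, aux_ae_ne b] with t hlebt hta htb
        by_cases htab : t ∈ Set.Ioo a b
        · rw [Set.indicator_of_mem (Set.mem_Ioc.mpr ⟨htab.1, htab.2.le⟩)]
          have hmemf : ∀ᶠ δ in 𝓝[>] (0:ℝ),
              (h (G (t + δ)) - h (G t)) / (δ:ℂ) = F δ t := by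
            filter_upwards [Ioo_mem_nhdsGT_of_mem
              (Set.mem_Ico.mpr ⟨le_rfl, sub_pos.2 htab.2⟩ : (0:ℝ) ∈ Set.Ico 0 (b - t))] with δ hδ
            simp only [hFdef]
            rw [Set.indicator_of_mem (Set.mem_Ioc.mpr ⟨htab.1, by linarith [hδ.2]⟩)]
          refine Tendsto.congr' hmemf ?_
          have hzt : Tendsto (fun δ : ℝ => t + δ) (𝓝[>] (0:ℝ)) (𝓝[Set.Ioc t b] t) := by
            rw [tendsto_nhdsWithin_iff]
            constructor
            · have h0 : Tendsto (fun δ : ℝ => t + δ) (𝓝 0) (𝓝 (t + 0)) :=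
                tendsto_const_nhds.add tendsto_id
              simpa using h0.mono_left nhdsWithin_le_nhds
            · filter_upwards [Ioc_mem_nhdsGT
                (sub_pos.2 htab.2)] with δ hδ
              exact Set.mem_Ioc.mpr ⟨by linarith [hδ.1], by linarith [hδ.2]⟩
          have hGmem : ∀ᶠ δ in 𝓝[>] (0:ℝ), t + δ ∈ Set.Ioc t b :=
            hzt.eventually eventually_mem_nhdsWithin
          have hdecomp : ∀ δ : ℝ, (h (G (t + δ)) - h (G t)) / (δ:ℂ)
              = (h (G (t + δ)) - h (G t) - h' (G t) * (G (t + δ) - G t)) / (δ:ℂ)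
                + h' (G t) * ((G (t + δ) - G t) / (δ:ℂ)) := by
            intro δ
            ring
          have T1 : Tendsto (fun δ : ℝ =>
              (h (G (t + δ)) - h (G t) - h' (G t) * (G (t + δ) - G t)) / (δ:ℂ))
              (𝓝[>] (0:ℝ)) (𝓝 0) := by
            rw [NormedAddCommGroup.tendsto_nhds_zero]
            intro ε hε
            have hε' : (0:ℝ) < ε / (2 * (Cφ + 1)) := by positivity
            have hkey := key t ⟨htab.1.le, htab.2⟩ _ hε'
            filter_upwards [hzt.eventually hkey, hGmem, self_mem_nhdsWithin]
              with δ hk hmem hδpos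
            have hδ0 : (0:ℝ) < δ := hδpos
            have hGb : ‖G (t + δ) - G t‖ ≤ Cφ * δ := by
              have := hGLip t ⟨htab.1.le, htab.2.le⟩ (t + δ)
                ⟨by linarith [htab.1], hmem.2⟩ (by linarith)
              have he : Cφ * (t + δ - t) = Cφ * δ := by ring
              linarith
            rw [norm_div, Complex.norm_real, Real.norm_eq_abs, abs_of_pos hδ0,
              div_lt_iff₀ hδ0]
            have hch : ‖h (G (t + δ)) - h (G t) - h' (G t) * (G (t + δ) - G t)‖
                ≤ (ε / (2 * (Cφ + 1))) * (Cφ * δ) :=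
              hk.trans (mul_le_mul_of_nonneg_left hGb hε'.le)
            have : (ε / (2 * (Cφ + 1))) * (Cφ * δ) < ε * δ := by
              rw [div_mul_eq_mul_div, div_lt_iff₀ (by linarith)]
              nlinarith [mul_pos hε hδ0, mul_nonneg (mul_nonneg hε.le hδ0.le) hCφ0]
            linarith
          have T2' : Tendsto (fun δ : ℝ => (G (t + δ) - G t) / (δ:ℂ))
              (𝓝[>] (0:ℝ)) (𝓝 (φ t)) := by
            rw [← tendsto_sub_nhds_zero_iff]
            have hbd2 : ∀ᶠ δ in 𝓝[>] (0:ℝ), ‖(G (t + δ) - G t) / (δ:ℂ) - φ t‖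
                ≤ 2 * ⨍ y in Metric.closedBall t δ,
                  ‖(Set.indicator (Set.Icc a b) φ) y - (Set.indicator (Set.Icc a b) φ) t‖ := by
              filter_upwards [Ioo_mem_nhdsGT_of_mem
                (Set.mem_Ico.mpr ⟨le_rfl, sub_pos.2 htab.2⟩ : (0:ℝ) ∈ Set.Ico 0 (b - t))] with δ hδ
              have hδ0 := hδ.1
              have htI : t ∈ Set.Icc a b := ⟨htab.1.le, htab.2.le⟩
              have htδI : t + δ ∈ Set.Icc a b :=
                ⟨by linarith [htab.1], by linarith [hδ.2]⟩
              have e1 : G (t + δ) - G t = ∫ s in t..(t + δ), φ s := hsub t htI (t + δ) htδI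
              have e2 : (∫ s in t..(t + δ), φ s) - (δ:ℝ) • φ t
                  = ∫ s in t..(t + δ), (φ s - φ t) := by
                rw [intervalIntegral.integral_sub (hIφ t htI (t + δ) htδI)
                  intervalIntegrable_const, intervalIntegral.integral_const]
                rw [(by ring : t + δ - t = δ)]
              have hδc : (δ:ℂ) ≠ 0 := Complex.ofReal_ne_zero.mpr (ne_of_gt hδ0)
              have e3 : (G (t + δ) - G t) / (δ:ℂ) - φ t
                  = (δ:ℝ)⁻¹ • ((G (t + δ) - G t) - (δ:ℝ) • φ t) := by
                rw [Complex.real_smul, Complex.real_smul]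
                field_simp
                push_cast
                linear_combination (-(G (t + δ) - G t - ↑δ * φ t)) * (mul_inv_cancel₀ hδc)
              rw [e3, e1, e2, norm_smul, norm_inv,
                Real.norm_eq_abs, abs_of_pos hδ0]
              have n4 : ‖∫ s in t..(t + δ), (φ s - φ t)‖
                  ≤ ∫ s in Set.Ioc t (t + δ), ‖φ s - φ t‖ := by
                have hn1 := intervalIntegral.norm_integral_le_integral_norm
                  (f := fun s => φ s - φ t) (μ := volume) (a := t) (b := t + δ)
                  (by linarith)
                have hn2 : (∫ s in t..(t + δ), ‖φ s - φ t‖)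
                    = ∫ s in Set.Ioc t (t + δ), ‖φ s - φ t‖ :=
                  intervalIntegral.integral_of_le (by linarith)
                rw [hn2] at hn1
                exact hn1
              have n5 : ∫ s in Set.Ioc t (t + δ), ‖φ s - φ t‖
                  = ∫ s in Set.Ioc t (t + δ), ‖(Set.indicator (Set.Icc a b) φ) s
                    - (Set.indicator (Set.Icc a b) φ) t‖ := by
                apply setIntegral_congr_fun measurableSet_Ioc
                intro s hs
                have hsI : s ∈ Set.Icc a b := ⟨by linarith [hs.1, htab.1], by linarith [hs.2, hδ.2]⟩
                simp only [Set.indicator_of_mem hsI, Set.indicator_of_mem htI]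
              have n6 : ∫ s in Set.Ioc t (t + δ), ‖(Set.indicator (Set.Icc a b) φ) s
                    - (Set.indicator (Set.Icc a b) φ) t‖
                  ≤ ∫ s in Metric.closedBall t δ, ‖(Set.indicator (Set.Icc a b) φ) s
                    - (Set.indicator (Set.Icc a b) φ) t‖ := by
                apply setIntegral_mono_set
                · refine Integrable.norm ?_
                  refine Integrable.sub hφ'i.integrableOn ?_
                  exact integrableOn_const measure_closedBall_lt_top.ne
                · exact Eventually.of_forall (fun s => norm_nonneg _)
                · refine HasSubset.Subset.eventuallyLE ?_
                  rw [Real.closedBall_eq_Icc]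
                  exact Set.Ioc_subset_Icc_self.trans
                    (Set.Icc_subset_Icc (by linarith) le_rfl)
              have n7 : ∫ s in Metric.closedBall t δ, ‖(Set.indicator (Set.Icc a b) φ) s
                    - (Set.indicator (Set.Icc a b) φ) t‖
                  = (2 * δ) * ⨍ y in Metric.closedBall t δ,
                    ‖(Set.indicator (Set.Icc a b) φ) y
                      - (Set.indicator (Set.Icc a b) φ) t‖ := by
                rw [MeasureTheory.setAverage_eq, measureReal_def, Real.volume_closedBall,
                  ENNReal.toReal_ofReal (by positivity), smul_eq_mul]
                field_simp
              have hfin : δ⁻¹ * ‖∫ s in t..(t + δ), (φ s - φ t)‖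
                  ≤ δ⁻¹ * ((2 * δ) * ⨍ y in Metric.closedBall t δ,
                    ‖(Set.indicator (Set.Icc a b) φ) y
                      - (Set.indicator (Set.Icc a b) φ) t‖) := by
                apply mul_le_mul_of_nonneg_left _ (by positivity)
                rw [← n7]
                exact n4.trans (n5.le.trans n6)
              refine hfin.trans ?_
              rw [← mul_assoc]
              have : δ⁻¹ * (2 * δ) = 2 := by field_simp
              rw [this]
            have htz2 : Tendsto (fun δ => 2 * ⨍ y in Metric.closedBall t δ,
                ‖(Set.indicator (Set.Icc a b) φ) y - (Set.indicator (Set.Icc a b) φ) t‖)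
                (𝓝[>] (0:ℝ)) (𝓝 0) := by
              have hmemcb : ∀ᶠ δ in 𝓝[>] (0:ℝ),
                  t ∈ Metric.closedBall ((fun _ : ℝ => t) δ) (1 * (id δ : ℝ)) := by
                filter_upwards [self_mem_nhdsWithin] with δ hδ
                have hδ0 : (0:ℝ) < δ := hδ
                have : t ∈ Metric.closedBall t (1 * δ) :=
                  Metric.mem_closedBall_self (by linarith)
                simpa using this
              have hlim := hlebt (fun _ : ℝ => t) id tendsto_id hmemcb
              have := hlim.const_mul (2:ℝ)
              simpa using this
            exact squeeze_zero_norm' hbd2 htz2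
          have T2 : Tendsto (fun δ : ℝ => h' (G t) * ((G (t + δ) - G t) / (δ:ℂ)))
              (𝓝[>] (0:ℝ)) (𝓝 (h' (G t) * φ t)) := T2'.const_mul _
          have := T1.add T2
          rw [zero_add] at this
          exact this.congr (fun δ => (hdecomp δ).symm)
        · have htIoc : t ∉ Set.Ioc a b := fun hmem =>
            htab ⟨hmem.1, lt_of_le_of_ne hmem.2 htb⟩
          rw [Set.indicator_of_notMem htIoc]
          apply Tendsto.congr' ?_ (tendsto_const_nhds (x := (0:ℂ)))
          filter_upwards [self_mem_nhdsWithin] with δ hδ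
          have hδ0 : (0:ℝ) < δ := hδ
          have : t ∉ Set.Ioc a (b - δ) := fun hmem =>
            htIoc ⟨hmem.1, by linarith [hmem.2]⟩
          simp only [hFdef]
          rw [Set.indicator_of_notMem this]
    rw [hfeq] at hdct
    exact hdct.congr' hΦeq
  exact tendsto_nhds_unique TB TA

lemma isFDeriv_apply {F : Set PathData} {f g : ℂ → ℂ} (h : IsFDeriv F f g)
    {γ : ℝ → ℂ} {a b : ℝ} (hm : ((γ, a, b) : PathData) ∈ F) :
    (∫ t in a..b, g (γ t) * deriv γ t) = f (γ b) - f (γ a) := by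
  have h2 := h _ hm
  exact h2

set_option maxHeartbeats 1000000 in
/-- If `(f, f₁)` is a uniform limit of pairs `(h, h')` where `h` is
differentiable on `X` with continuous derivative `h'` (e.g. if `D(X)` is dense in
`D¹_F(X)`), and `g(X) ⊆ X`, then the chain rule holds: `(f₁ ∘ g)·g₁` is an
`F`-derivative of `f ∘ g`. -/
theorem fDeriv_comp_of_dense (X : Set ℂ) (hX : IsCompact X)
    (F : Set PathData) (hF : Effective X F)
    (f f₁ g g₁ : ℂ → ℂ)
    (hf : ContinuousOn f X) (hf₁ : ContinuousOn f₁ X)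
    (hg : ContinuousOn g X) (hg₁ : ContinuousOn g₁ X)
    (hfd : IsFDeriv F f f₁) (hgd : IsFDeriv F g g₁)
    (hgX : g '' X ⊆ X)
    (happrox : ∀ ε > (0:ℝ), ∃ h h' : ℂ → ℂ, ContinuousOn h' X ∧
      (∀ x ∈ X, HasDerivWithinAt h (h' x) X x) ∧
      supOn (fun x => f x - h x) X + supOn (fun x => f₁ x - h' x) X < ε) :
    IsFDeriv F (fun x => f (g x)) (fun x => f₁ (g x) * g₁ x) := by
  intro p hp
  obtain ⟨⟨hab, ⟨K, hK⟩, himg⟩, _hadm⟩ := hF.1 p hp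
  have hclosed := hF.2.1
  obtain ⟨γ, a, b⟩ := p
  simp only at hab hK himg ⊢
  have hγX : ∀ t ∈ Set.Icc a b, γ t ∈ X := fun t ht => himg ⟨t, ht, rfl⟩
  have hγcont : ContinuousOn γ (Set.Icc a b) := hK.continuousOn
  have hXne : X.Nonempty := ⟨γ a, hγX a ⟨le_rfl, hab.le⟩⟩
  have hmapsγ : Set.MapsTo γ (Set.Icc a b) X := fun t ht => hγX t ht
  have hmapsg : Set.MapsTo g X X := fun x hx => hgX ⟨x, hx, rfl⟩
  have hKnn : (0:ℝ) ≤ (K:ℝ) := K.2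
  have hKd : ∀ t ∈ Set.Ioo a b, ‖deriv γ t‖ ≤ (K:ℝ) := fun t ht => aux_deriv_bound hK ht
  obtain ⟨Sg₀, hSg₀⟩ := hX.exists_bound_of_continuousOn hg₁
  set Sg := max Sg₀ 0 with hSgdef
  have hSg0 : 0 ≤ Sg := le_max_right _ _
  have hSg : ∀ x ∈ X, ‖g₁ x‖ ≤ Sg := fun x hx => (hSg₀ x hx).trans (le_max_left _ _)
  have hφb : ∀ t ∈ Set.Ioo a b, ‖g₁ (γ t) * deriv γ t‖ ≤ Sg * (K:ℝ) := by
    intro t ht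
    rw [norm_mul]
    exact mul_le_mul (hSg _ (hγX t ⟨ht.1.le, ht.2.le⟩)) (hKd t ht) (norm_nonneg _) hSg0
  have hAESM : ∀ (v : ℂ → ℂ), ContinuousOn v X → ∀ s : Set ℝ, MeasurableSet s →
      s ⊆ Set.Icc a b →
      AEStronglyMeasurable (fun t => v (γ t) * deriv γ t) (volume.restrict s) := by
    intro v hv s hs hssub
    refine AEStronglyMeasurable.mul ?_ ((measurable_deriv γ).aestronglyMeasurable.restrict)
    exact ((hv.comp hγcont hmapsγ).mono hssub).aestronglyMeasurable hs
  have hφi : IntegrableOn (fun t => g₁ (γ t) * deriv γ t) (Set.Icc a b) := by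
    refine Integrable.mono'
      ((integrableOn_const measure_Icc_lt_top.ne) :
        IntegrableOn (fun _ : ℝ => Sg * (K:ℝ)) (Set.Icc a b) volume)
      (hAESM g₁ hg₁ _ measurableSet_Icc subset_rfl) ?_
    refine (ae_restrict_iff' measurableSet_Icc).mpr ?_
    filter_upwards [aux_ae_ne a, aux_ae_ne b] with t hta htb ht
    exact hφb t ⟨lt_of_le_of_ne ht.1 (Ne.symm hta), lt_of_le_of_ne ht.2 htb⟩
  have hGint : ∀ c ∈ Set.Icc a b,
      g (γ c) = g (γ a) + ∫ t in a..c, g₁ (γ t) * deriv γ t := by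
    intro c hc
    rcases eq_or_lt_of_le hc.1 with rfl | hac
    · simp
    · have hmem : ((γ, a, c) : PathData) ∈ F := hclosed (γ, a, b) hp a c le_rfl hac hc.2
      rw [isFDeriv_apply hgd hmem]
      ring
  have hii : ∀ (v : ℂ → ℂ), ContinuousOn v X → ∃ Sv, 0 ≤ Sv ∧ ∀ x ∈ X, ‖v x‖ ≤ Sv := by
    intro v hv
    obtain ⟨Sv₀, hSv₀⟩ := hX.exists_bound_of_continuousOn hv
    exact ⟨max Sv₀ 0, le_max_right _ _, fun x hx => (hSv₀ x hx).trans (le_max_left _ _)⟩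
  have hiint : ∀ (v : ℂ → ℂ), ContinuousOn v X →
      IntervalIntegrable (fun t => v (γ t) * deriv γ t) volume a b := by
    intro v hv
    obtain ⟨Sv, hSv0, hSv⟩ := hii v hv
    refine aux_intervalIntegrable hab.le
      (hAESM v hv _ measurableSet_Ioc Set.Ioc_subset_Icc_self) (C := Sv * (K:ℝ)) ?_
    filter_upwards [aux_ae_ne b] with t htb ht
    rw [norm_mul]
    exact mul_le_mul (hSv _ (hγX t ⟨ht.1.le, ht.2⟩))
      (hKd t ⟨ht.1, lt_of_le_of_ne ht.2 htb⟩) (norm_nonneg _) hSv0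
  set A := (∫ t in a..b, (f₁ (g (γ t)) * g₁ (γ t)) * deriv γ t)
    - (f (g (γ b)) - f (g (γ a))) with hAdef
  set C := (b - a) * (Sg * (K:ℝ)) + 2 with hCdef
  have hC0 : 0 ≤ C := by
    rw [hCdef]
    have : (0:ℝ) ≤ (b - a) * (Sg * (K:ℝ)) :=
      mul_nonneg (by linarith) (mul_nonneg hSg0 hKnn)
    linarith
  have hsupfact : ∀ (u : ℂ → ℂ), ContinuousOn u X →
      (∀ x ∈ X, ‖u x‖ ≤ supOn u X) ∧ 0 ≤ supOn u X := by
    intro u hu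
    have hbdd : BddAbove ((fun x => ‖u x‖) '' X) := by
      have hc : ContinuousOn (fun x => ‖u x‖) X := by
        have := hu.norm
        simpa using this
      exact (hX.image_of_continuousOn hc).bddAbove
    have hle : ∀ x ∈ X, ‖u x‖ ≤ supOn u X := by
      intro x hx
      exact le_csSup hbdd ⟨x, hx, rfl⟩
    obtain ⟨x₀, hx₀⟩ := hXne
    exact ⟨hle, le_trans (norm_nonneg _) (hle x₀ hx₀)⟩
  have hmain : ∀ ε > (0:ℝ), ‖A‖ ≤ C * ε := by
    intro ε hε
    obtain ⟨h, h', hh'c, hh'd, hsum⟩ := happrox ε hε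
    have hcore := core_chain (G := fun t => g (γ t))
      (φ := fun t => g₁ (γ t) * deriv γ t) hh'c hh'd hab hφi hφb hGint
      (fun t ht => hmapsg (hγX t ht))
    obtain ⟨hS0le, hS00⟩ := hsupfact (fun x => f x - h x)
      (hf.sub (fun x hx => (hh'd x hx).continuousWithinAt))
    obtain ⟨hS1le, hS10⟩ := hsupfact (fun x => f₁ x - h' x) (hf₁.sub hh'c)
    have hS0ε : supOn (fun x => f x - h x) X < ε := by linarith
    have hS1ε : supOn (fun x => f₁ x - h' x) X < ε := by linarith
    have hI1 := hiint (fun x => f₁ (g x) * g₁ x) ((hf₁.comp hg hmapsg).mul hg₁)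
    have hI2 := hiint (fun x => h' (g x) * g₁ x) ((hh'c.comp hg hmapsg).mul hg₁)
    have hIdiff : (∫ t in a..b, (f₁ (g (γ t)) * g₁ (γ t)) * deriv γ t)
        - (∫ t in a..b, (h' (g (γ t)) * g₁ (γ t)) * deriv γ t)
        = ∫ t in a..b, ((f₁ (g (γ t)) - h' (g (γ t))) * g₁ (γ t)) * deriv γ t := by
      rw [← intervalIntegral.integral_sub hI1 hI2]
      apply intervalIntegral.integral_congr
      intro t _
      ring
    have hcore' : (∫ t in a..b, (h' (g (γ t)) * g₁ (γ t)) * deriv γ t)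
        = h (g (γ b)) - h (g (γ a)) := by
      rw [← hcore]
      apply intervalIntegral.integral_congr
      intro t _
      ring
    have hb1 : ‖∫ t in a..b, ((f₁ (g (γ t)) - h' (g (γ t))) * g₁ (γ t)) * deriv γ t‖
        ≤ (supOn (fun x => f₁ x - h' x) X * Sg * (K:ℝ)) * |b - a| := by
      apply intervalIntegral.norm_integral_le_of_norm_le_const_ae
      filter_upwards [aux_ae_ne b] with t htb ht
      rw [Set.uIoc_of_le hab.le] at ht
      have htoo : t ∈ Set.Ioo a b := ⟨ht.1, lt_of_le_of_ne ht.2 htb⟩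
      have hγt : γ t ∈ X := hγX t ⟨htoo.1.le, htoo.2.le⟩
      have hgγt : g (γ t) ∈ X := hmapsg hγt
      rw [norm_mul, norm_mul]
      have e1 : ‖f₁ (g (γ t)) - h' (g (γ t))‖ ≤ supOn (fun x => f₁ x - h' x) X :=
        hS1le _ hgγt
      exact mul_le_mul (mul_le_mul e1 (hSg _ hγt) (norm_nonneg _) hS10)
        (hKd t htoo) (norm_nonneg _) (mul_nonneg hS10 hSg0)
    have hAeq : A = (∫ t in a..b, ((f₁ (g (γ t)) - h' (g (γ t))) * g₁ (γ t)) * deriv γ t)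
        - ((f (g (γ b)) - h (g (γ b))) - (f (g (γ a)) - h (g (γ a)))) := by
      rw [hAdef, ← hIdiff, hcore']
      ring
    have hb2 : ‖(f (g (γ b)) - h (g (γ b))) - (f (g (γ a)) - h (g (γ a)))‖
        ≤ supOn (fun x => f x - h x) X + supOn (fun x => f x - h x) X := by
      refine (norm_sub_le _ _).trans (add_le_add ?_ ?_)
      · exact hS0le _ (hmapsg (hγX b ⟨hab.le, le_rfl⟩))
      · exact hS0le _ (hmapsg (hγX a ⟨le_rfl, hab.le⟩))
    rw [hAeq]
    refine (norm_sub_le _ _).trans ?_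
    have habs : |b - a| = b - a := abs_of_nonneg (by linarith)
    rw [habs] at hb1
    have hba : (0:ℝ) ≤ b - a := by linarith
    have e7 : supOn (fun x => f₁ x - h' x) X * Sg * (K:ℝ) * (b - a)
        ≤ ε * (Sg * (K:ℝ) * (b - a)) := by
      calc supOn (fun x => f₁ x - h' x) X * Sg * (K:ℝ) * (b - a)
          = supOn (fun x => f₁ x - h' x) X * (Sg * (K:ℝ) * (b - a)) := by ring
        _ ≤ ε * (Sg * (K:ℝ) * (b - a)) := mul_le_mul_of_nonneg_right hS1ε.le
            (mul_nonneg (mul_nonneg hSg0 hKnn) hba)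
    have e8 : C * ε = ε * (Sg * (K:ℝ) * (b - a)) + 2 * ε := by
      rw [hCdef]; ring
    rw [e8]
    linarith
  have hA0 : A = 0 := by
    by_contra hA
    have hpos : 0 < ‖A‖ := norm_pos_iff.mpr hA
    have h1 := hmain (‖A‖ / (2 * (C + 1))) (by positivity)
    have h2 : C * (‖A‖ / (2 * (C + 1))) < ‖A‖ := by
      have e : C * (‖A‖ / (2 * (C + 1))) = (C * ‖A‖) / (2 * (C + 1)) := by ring
      rw [e, div_lt_iff₀ (by positivity)]
      nlinarith
    linarith
  have : (∫ t in a..b, (f₁ (g (γ t)) * g₁ (γ t)) * deriv γ t)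
      = f (g (γ b)) - f (g (γ a)) := by
    have := hA0
    rw [hAdef] at this
    linear_combination this
  exact this
end
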